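/- arXiv:2410.00411 — 5 statements merged into one kernel-verified Lean document; each statement's English description precedes it below -/
import Mathlib

section
/- For every real number β > 1 and every z ∈ ℂ with |z| < β, one has 1 − φ_β(z) = (1 − z)·ψ_β(z), where both series defining φ_β and ψ_β converge absolutely at z. -/
open scoped BigOperators

/-- The beta-map `x ↦ βx - ⌊βx⌋`. -/
noncomputable def tau (β x : ℝ) : ℝ := β * x - ⌊β * x⌋

/-- Greedy digit `a_n(β,x) = ⌊β·τ_β^{n-1}(x)⌋` (meaningful for `n ≥ 1`). -/
noncomputable def dig (β x : ℝ) (n : ℕ) : ℤ := ⌊β * (tau β)^[n - 1] x⌋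

/-- `x` is a simple point for `β`: some `τ_β^{n-1}(x)` lies in `{1/β, …, ⌊β⌋/β}`. -/
def IsSimplePt (β x : ℝ) : Prop :=
  ∃ n : ℕ, 1 ≤ n ∧ ∃ k : ℕ, 1 ≤ k ∧ (k : ℤ) ≤ ⌊β⌋ ∧ (tau β)^[n - 1] x = (k : ℝ) / β

/-- `L(x)`: the least `n ≥ 1` with `τ_β^{n-1}(x) ∈ {1/β, …, ⌊β⌋/β}`. -/
noncomputable def Lpt (β x : ℝ) : ℕ :=
  sInf {n : ℕ | 1 ≤ n ∧ ∃ k : ℕ, 1 ≤ k ∧ (k : ℤ) ≤ ⌊β⌋ ∧ (tau β)^[n - 1] x = (k : ℝ) / β}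

/-- `β` is simple if `x = 1` is a simple point for `β`. -/
def IsSimpleBeta (β : ℝ) : Prop := IsSimplePt β 1

open Classical in
/-- Quasi-greedy digit `d_n(β,1)` (meaningful for `n ≥ 1`): if `β` is simple with `L = L(1)`,
the periodic sequence repeating the block `(a_1, …, a_{L-1}, a_L - 1)`; otherwise `a_n(β,1)`. -/
noncomputable def qdig (β : ℝ) (n : ℕ) : ℤ :=
  if IsSimpleBeta β then
    (if (n - 1) % Lpt β 1 = Lpt β 1 - 1 then dig β 1 (Lpt β 1) - 1
     else dig β 1 ((n - 1) % Lpt β 1 + 1))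
  else dig β 1 n

/-- `φ_β(z) = Σ_{n≥1} a_n(β,1) β^{-n} z^n`. -/
noncomputable def phi (β : ℝ) (z : ℂ) : ℂ :=
  ∑' n : ℕ, (dig β 1 (n + 1) : ℂ) * (z / (β : ℂ)) ^ (n + 1)

/-- `φ̂_β(z) = Σ_{n≥1} d_n(β,1) β^{-n} z^n`. -/
noncomputable def phiHat (β : ℝ) (z : ℂ) : ℂ :=
  ∑' n : ℕ, (qdig β (n + 1) : ℂ) * (z / (β : ℂ)) ^ (n + 1)

/-- `ψ_β(z) = 1 + Σ_{n≥1} τ_β^n(1) β^{-n} z^n`. -/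
noncomputable def psi (β : ℝ) (z : ℂ) : ℂ :=
  1 + ∑' n : ℕ, (((tau β)^[n + 1] 1 : ℝ) : ℂ) * (z / (β : ℂ)) ^ (n + 1)

/-- `F_λ(x) = Σ_{n≥1} a_n(β,x)/(βλ)^n`. -/
noncomputable def Ffun (β : ℝ) (lam : ℂ) (x : ℝ) : ℂ :=
  ∑' n : ℕ, (dig β x (n + 1) : ℂ) / ((β : ℂ) * lam) ^ (n + 1)

theorem stmt6 (β : ℝ) (hβ : 1 < β) (z : ℂ) (hz : ‖z‖ < β) :
    Summable (fun n : ℕ => ‖(dig β 1 (n + 1) : ℂ) * (z / (β : ℂ)) ^ (n + 1)‖) ∧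
    Summable (fun n : ℕ => ‖(((tau β)^[n + 1] 1 : ℝ) : ℂ) * (z / (β : ℂ)) ^ (n + 1)‖) ∧
    1 - phi β z = (1 - z) * psi β z := by
  have hβ0 : (0:ℝ) < β := lt_trans one_pos hβ
  have hβc : (β:ℂ) ≠ 0 := by exact_mod_cast hβ0.ne'
  set w : ℂ := z / (β:ℂ) with hw
  have hwabs : ‖w‖ < 1 := by
    rw [hw, norm_div]
    simp only [Complex.norm_real, Real.norm_eq_abs, abs_of_pos hβ0]
    exact (div_lt_one hβ0).2 hz
  have ht : ∀ n, 0 ≤ (tau β)^[n] 1 ∧ (tau β)^[n] 1 ≤ 1 := by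
    intro n; induction n with
    | zero => norm_num
    | succ n ih =>
      rw [Function.iterate_succ_apply']
      have h1 : tau β ((tau β)^[n] 1) = Int.fract (β * (tau β)^[n] 1) := rfl
      rw [h1]
      exact ⟨Int.fract_nonneg _, le_of_lt (Int.fract_lt_one _)⟩
  have hdig_eq : ∀ n : ℕ, ((dig β 1 (n+1) : ℝ)) = β * (tau β)^[n] 1 - (tau β)^[n+1] 1 := by
    intro n
    rw [Function.iterate_succ_apply']
    simp only [dig, Nat.add_sub_cancel, tau]
    ring
  have hdig_nonneg : ∀ n : ℕ, (0:ℝ) ≤ (dig β 1 (n+1) : ℝ) := by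
    intro n
    simp only [dig, Nat.add_sub_cancel]
    have : (0:ℝ) ≤ β * (tau β)^[n] 1 := mul_nonneg hβ0.le (ht n).1
    exact_mod_cast Int.floor_nonneg.2 this
  have hdig_le : ∀ n : ℕ, ((dig β 1 (n+1) : ℝ)) ≤ β := by
    intro n
    simp only [dig, Nat.add_sub_cancel]
    calc ((⌊β * (tau β)^[n] 1⌋ : ℝ)) ≤ β * (tau β)^[n] 1 := Int.floor_le _
      _ ≤ β * 1 := mul_le_mul_of_nonneg_left (ht n).2 hβ0.le
      _ = β := mul_one β
  have hgeo : Summable (fun n : ℕ => ‖w‖ ^ (n+1)) := by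
    have := summable_geometric_of_lt_one (norm_nonneg w) hwabs
    simpa [pow_succ'] using this.mul_left (‖w‖)
  have hs1 : Summable (fun n : ℕ => ‖(dig β 1 (n + 1) : ℂ) * w ^ (n + 1)‖) := by
    apply Summable.of_nonneg_of_le (fun n => norm_nonneg _) _ (hgeo.mul_left β)
    intro n
    rw [norm_mul, norm_pow]
    have h1 : ‖(dig β 1 (n+1) : ℂ)‖ ≤ β := by
      rw [show ((dig β 1 (n+1) : ℂ)) = (((dig β 1 (n+1) : ℝ)) : ℂ) by push_cast; ring,
        Complex.norm_real, Real.norm_eq_abs, abs_of_nonneg (hdig_nonneg n)]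
      exact hdig_le n
    have h2 : (0:ℝ) ≤ ‖w‖ ^ (n+1) := pow_nonneg (norm_nonneg _) _
    calc ‖(dig β 1 (n+1) : ℂ)‖ * ‖w‖ ^ (n+1) ≤ β * ‖w‖ ^ (n+1) :=
          mul_le_mul_of_nonneg_right h1 h2
      _ = β * ‖w‖ ^ (n+1) := rfl
  have hs2 : Summable (fun n : ℕ => ‖(((tau β)^[n + 1] 1 : ℝ) : ℂ) * w ^ (n + 1)‖) := by
    apply Summable.of_nonneg_of_le (fun n => norm_nonneg _) _ hgeo
    intro n
    rw [norm_mul, norm_pow, Complex.norm_real, Real.norm_eq_abs,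
      abs_of_nonneg (ht (n+1)).1]
    have h2 : (0:ℝ) ≤ ‖w‖ ^ (n+1) := pow_nonneg (norm_nonneg _) _
    calc (tau β)^[n+1] 1 * ‖w‖ ^ (n+1) ≤ 1 * ‖w‖ ^ (n+1) :=
          mul_le_mul_of_nonneg_right (ht (n+1)).2 h2
      _ = ‖w‖ ^ (n+1) := one_mul _
  refine ⟨hs1, hs2, ?_⟩
  -- summability of the complex series
  have hS1 : Summable (fun n : ℕ => (dig β 1 (n + 1) : ℂ) * w ^ (n + 1)) :=
    Summable.of_norm hs1
  have hS2 : Summable (fun n : ℕ => (((tau β)^[n + 1] 1 : ℝ) : ℂ) * w ^ (n + 1)) :=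
    Summable.of_norm hs2
  have hS0 : Summable (fun n : ℕ => (((tau β)^[n] 1 : ℝ) : ℂ) * w ^ n) := by
    apply Summable.of_norm
    apply Summable.of_nonneg_of_le (fun n => norm_nonneg _) _
      (summable_geometric_of_lt_one (norm_nonneg w) hwabs)
    intro n
    rw [norm_mul, norm_pow, Complex.norm_real, Real.norm_eq_abs, abs_of_nonneg (ht n).1]
    have h2 : (0:ℝ) ≤ ‖w‖ ^ n := pow_nonneg (norm_nonneg _) _
    calc (tau β)^[n] 1 * ‖w‖ ^ n ≤ 1 * ‖w‖ ^ n :=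
          mul_le_mul_of_nonneg_right (ht n).2 h2
      _ = ‖w‖ ^ n := one_mul _
  have hzw : z = (β:ℂ) * w := by rw [hw]; field_simp
  -- rewrite phi
  have hterm : ∀ n : ℕ, (dig β 1 (n + 1) : ℂ) * w ^ (n + 1)
      = z * ((((tau β)^[n] 1 : ℝ) : ℂ) * w ^ n)
        - (((tau β)^[n+1] 1 : ℝ) : ℂ) * w ^ (n + 1) := by
    intro n
    have h := hdig_eq n
    have hc : ((dig β 1 (n+1) : ℂ)) = (β:ℂ) * (((tau β)^[n] 1 : ℝ) : ℂ)
        - (((tau β)^[n+1] 1 : ℝ) : ℂ) := by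
      have : (((dig β 1 (n+1) : ℝ)) : ℂ)
          = ((β * (tau β)^[n] 1 - (tau β)^[n+1] 1 : ℝ) : ℂ) := by rw [h]
      push_cast at this ⊢
      linear_combination this
    rw [hc, hzw]
    ring
  have hphi : phi β z = z * (∑' n : ℕ, (((tau β)^[n] 1 : ℝ) : ℂ) * w ^ n)
      - ∑' n : ℕ, (((tau β)^[n+1] 1 : ℝ) : ℂ) * w ^ (n + 1) := by
    unfold phi
    rw [← hw]
    calc (∑' n : ℕ, (dig β 1 (n + 1) : ℂ) * w ^ (n + 1))
        = ∑' n : ℕ, (z * ((((tau β)^[n] 1 : ℝ) : ℂ) * w ^ n)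
            - (((tau β)^[n+1] 1 : ℝ) : ℂ) * w ^ (n + 1)) := by
          exact tsum_congr hterm
      _ = (∑' n : ℕ, z * ((((tau β)^[n] 1 : ℝ) : ℂ) * w ^ n))
            - ∑' n : ℕ, (((tau β)^[n+1] 1 : ℝ) : ℂ) * w ^ (n + 1) :=
          Summable.tsum_sub (hS0.mul_left z) hS2
      _ = z * (∑' n : ℕ, (((tau β)^[n] 1 : ℝ) : ℂ) * w ^ n)
            - ∑' n : ℕ, (((tau β)^[n+1] 1 : ℝ) : ℂ) * w ^ (n + 1) := by
          rw [tsum_mul_left]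
  have hsplit : (∑' n : ℕ, (((tau β)^[n] 1 : ℝ) : ℂ) * w ^ n)
      = 1 + ∑' n : ℕ, (((tau β)^[n+1] 1 : ℝ) : ℂ) * w ^ (n + 1) := by
    rw [Summable.tsum_eq_zero_add hS0]
    norm_num
  have hpsi : psi β z = 1 + ∑' n : ℕ, (((tau β)^[n+1] 1 : ℝ) : ℂ) * w ^ (n + 1) := by
    unfold psi; rw [← hw]
  rw [hphi, hpsi, ← hsplit]
  set T := ∑' n : ℕ, (((tau β)^[n] 1 : ℝ) : ℂ) * w ^ n
  rw [hsplit]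
  ring
end

section
/- The set of real numbers β ∈ (1,∞) such that the set {t ∈ ℝ : −β < t < 0 and φ_β(t) = 1} is infinite (i.e. the analytic function 1 − φ_β has infinitely many zeros on the interval (−β, 0)) is dense in (1,∞). -/
open scoped BigOperators

set_option maxHeartbeats 1000000
set_option linter.unusedVariables false
set_option linter.unusedTactic false
set_option linter.unusedSectionVars false

namespace BZ

open Finset

lemma tau_eq_fract (β x : ℝ) : tau β x = Int.fract (β * x) := rfl

lemma tau_nonneg (β x : ℝ) : 0 ≤ tau β x := Int.fract_nonneg _
lemma tau_lt_one (β x : ℝ) : tau β x < 1 := Int.fract_lt_one _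

lemma iter_nonneg (β : ℝ) (k : ℕ) : 0 ≤ (tau β)^[k] 1 := by
  cases k with
  | zero => norm_num
  | succ k => rw [Function.iterate_succ_apply']; exact tau_nonneg _ _

lemma iter_lt_one (β : ℝ) {k : ℕ} (hk : 1 ≤ k) : (tau β)^[k] 1 < 1 := by
  obtain ⟨m, rfl⟩ := Nat.exists_eq_add_of_le hk
  rw [add_comm, Function.iterate_succ_apply']; exact tau_lt_one _ _

lemma iter_le_one (β : ℝ) (k : ℕ) : (tau β)^[k] 1 ≤ 1 := by
  cases k with
  | zero => simp
  | succ k => exact (iter_lt_one β (Nat.succ_le_succ (Nat.zero_le k))).le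

lemma dig_rec (β : ℝ) (k : ℕ) :
    (tau β)^[k+1] 1 = β * (tau β)^[k] 1 - dig β 1 (k+1) := by
  rw [Function.iterate_succ_apply']
  simp [tau, dig]

lemma dig_nonneg {β : ℝ} (hβ : 0 < β) (k : ℕ) : 0 ≤ dig β 1 (k+1) := by
  have h : (0:ℝ) ≤ β * (tau β)^[k] 1 := mul_nonneg hβ.le (iter_nonneg β k)
  simpa [dig] using Int.floor_nonneg.2 h

lemma dig_le_beta {β : ℝ} (hβ : 1 < β) (k : ℕ) : (dig β 1 (k+1) : ℝ) ≤ β := by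
  have h : β * (tau β)^[k] 1 ≤ β := by
    nlinarith [iter_le_one β k, iter_nonneg β k]
  calc (dig β 1 (k+1) : ℝ) ≤ β * (tau β)^[k] 1 := by
        simpa [dig] using Int.floor_le (β * (tau β)^[k] 1)
    _ ≤ β := h

lemma partial_sum {β : ℝ} (hβ : 0 < β) (K : ℕ) :
    ∑ n ∈ range K, (dig β 1 (n+1) : ℝ) * (β⁻¹)^(n+1)
      = 1 - (tau β)^[K] 1 * (β⁻¹)^K := by
  induction K with
  | zero => simp
  | succ K ih =>
    rw [Finset.sum_range_succ, ih]
    have hrec := dig_rec β K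
    have hβ0 : β ≠ 0 := ne_of_gt hβ
    have : ((dig β 1 (K+1) : ℝ)) = β * (tau β)^[K] 1 - (tau β)^[K+1] 1 := by
      rw [hrec]; ring
    rw [this]
    field_simp
    have hb : β * (1/β) = 1 := by field_simp
    linear_combination ((tau β)^[K] 1 * (1/β)^K) * hb

lemma exists_firstdiff {β : ℝ} (hβ : 1 < β) {k : ℕ} (hk : 1 ≤ k) :
    ∃ j : ℕ, 1 ≤ j ∧ (∀ i, 1 ≤ i → i < j → dig β 1 (k+i) = dig β 1 i) ∧
      dig β 1 (k+j) < dig β 1 j := by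
  have hks : (tau β)^[k] 1 < 1 := iter_lt_one β hk
  have key : ∀ t : ℕ, (∀ i, 1 ≤ i → i ≤ t → dig β 1 (k+i) = dig β 1 i) →
      (tau β)^[t] 1 - (tau β)^[k+t] 1 = β^t * (1 - (tau β)^[k] 1) := by
    intro t
    induction t with
    | zero => intro _; simp
    | succ t ih =>
      intro h
      have ht := ih (fun i h1 h2 => h i h1 (h2.trans (Nat.le_succ t)))
      have h1 := dig_rec β t
      have h2 := dig_rec β (k+t)
      have hdig : dig β 1 (k+(t+1)) = dig β 1 (t+1) :=
        h (t+1) (Nat.succ_le_succ (Nat.zero_le t)) le_rfl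
      have : k + (t+1) = (k+t) + 1 := by omega
      rw [this] at hdig
      rw [h1, show k + (t+1) = (k+t)+1 from by omega, h2, hdig]
      push_cast
      linear_combination β * ht
  -- the set of disagreement indices is nonempty
  have hne : ∃ j, 1 ≤ j ∧ dig β 1 (k+j) ≠ dig β 1 j := by
    by_contra hcon
    push_neg at hcon
    obtain ⟨T, hT⟩ := pow_unbounded_of_one_lt ((1 - (tau β)^[k] 1)⁻¹) hβ
    have hpos : 0 < 1 - (tau β)^[k] 1 := by linarith
    have := key T (fun i h1 _ => hcon i h1)
    have hub : (tau β)^[T] 1 - (tau β)^[k+T] 1 ≤ 1 := by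
      have := iter_le_one β T
      have := iter_nonneg β (k+T)
      linarith
    have : β ^ T * (1 - (tau β)^[k] 1) > 1 := by
      have h2 := mul_lt_mul_of_pos_right hT hpos
      rw [inv_mul_cancel₀ (ne_of_gt hpos)] at h2
      linarith
    linarith
  classical
  obtain ⟨j0, hj0⟩ := hne
  have hex : ∃ j, 1 ≤ j ∧ dig β 1 (k+j) ≠ dig β 1 j := ⟨j0, hj0⟩
  let j := Nat.find hex
  have hjspec := Nat.find_spec hex
  have hjmin : ∀ i < j, ¬(1 ≤ i ∧ dig β 1 (k+i) ≠ dig β 1 i) := fun i hi => Nat.find_min hex hi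
  refine ⟨j, hjspec.1, ?_, ?_⟩
  · intro i h1 h2
    by_contra hne2
    exact (hjmin i h2) ⟨h1, hne2⟩
  · -- dig (k+j) ≤ dig j via monotonicity
    have hj1 : 1 ≤ j := hjspec.1
    have hagree : ∀ i, 1 ≤ i → i ≤ j - 1 → dig β 1 (k+i) = dig β 1 i := by
      intro i h1 h2
      by_contra hne2
      exact (hjmin i (by omega)) ⟨h1, hne2⟩
    have hkey := key (j-1) hagree
    have hpos : 0 < 1 - (tau β)^[k] 1 := by linarith
    have hlt : (tau β)^[k + (j-1)] 1 < (tau β)^[j-1] 1 := by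
      have : (0:ℝ) < β ^ (j-1) * (1 - (tau β)^[k] 1) :=
        mul_pos (pow_pos (by linarith) _) hpos
      linarith
    have hle : dig β 1 (k+j) ≤ dig β 1 j := by
      have e1 : dig β 1 (k+j) = ⌊β * (tau β)^[k+j-1] 1⌋ := by
        simp [dig]
      have e2 : dig β 1 j = ⌊β * (tau β)^[j-1] 1⌋ := by simp [dig]
      rw [e1, e2]
      apply Int.floor_le_floor
      have : k + j - 1 = k + (j-1) := by omega
      rw [this]
      nlinarith [hlt]
    exact lt_of_le_of_ne hle hjspec.2


noncomputable def tl (c : ℕ → ℤ) (θ : ℝ) (k : ℕ) : ℝ := ∑' i : ℕ, (c (k+i+1) : ℝ) * θ^(i+1)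

lemma tl_summable {c : ℕ → ℤ} {θ Cb : ℝ} (hθ : |θ| < 1) (hc : ∀ n, |(c n : ℝ)| ≤ Cb) (k : ℕ) :
    Summable (fun i : ℕ => (c (k+i+1) : ℝ) * θ^(i+1)) := by
  apply Summable.of_norm
  have hgeo : Summable (fun i : ℕ => Cb * |θ| * |θ|^i) :=
    (summable_geometric_of_lt_one (abs_nonneg θ) hθ).mul_left _
  apply Summable.of_nonneg_of_le (fun i => norm_nonneg _) (fun i => ?_) hgeo
  rw [norm_mul, norm_pow]
  have h1 : ‖(c (k+i+1) : ℝ)‖ ≤ Cb := by rw [Real.norm_eq_abs]; exact hc _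
  have h2 : ‖θ‖^(i+1) = |θ| * |θ|^i := by rw [Real.norm_eq_abs, pow_succ]; ring
  rw [h2]
  have : (0:ℝ) ≤ |θ| * |θ|^i := by positivity
  nlinarith [norm_nonneg ((c (k+i+1) : ℝ)), abs_nonneg θ, pow_nonneg (abs_nonneg θ) i]

lemma tl_shift {c : ℕ → ℤ} {θ Cb : ℝ} (hθ : |θ| < 1) (hc : ∀ n, |(c n : ℝ)| ≤ Cb) (k : ℕ) :
    tl c θ k = (c (k+1) : ℝ) * θ + θ * tl c θ (k+1) := by
  unfold tl
  rw [Summable.tsum_eq_zero_add (tl_summable hθ hc k)]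
  congr 1
  · simp
  · rw [← tsum_mul_left]
    congr 1
    ext i
    have : k + (i+1) + 1 = (k+1) + i + 1 := by omega
    rw [this]
    ring

lemma tl_split {c : ℕ → ℤ} {θ Cb : ℝ} (hθ : |θ| < 1) (hc : ∀ n, |(c n : ℝ)| ≤ Cb) (k : ℕ) :
    ∀ t : ℕ, tl c θ k = (∑ i ∈ range t, (c (k+i+1) : ℝ) * θ^(i+1)) + θ^t * tl c θ (k+t) := by
  intro t
  induction t with
  | zero => simp
  | succ t ih =>
    rw [ih, Finset.sum_range_succ, tl_shift hθ hc (k+t)]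
    have : k + (t+1) = (k+t)+1 := by omega
    rw [this]
    ring

lemma tl_nonneg {c : ℕ → ℤ} {θ : ℝ} (hθ : 0 ≤ θ) (hc : ∀ n, 0 ≤ c n) (k : ℕ) :
    0 ≤ tl c θ k := by
  apply tsum_nonneg
  intro i
  have : (0:ℝ) ≤ (c (k+i+1) : ℝ) := by exact_mod_cast hc _
  positivity

lemma tl_zrun {c : ℕ → ℤ} {θ Cb : ℝ} (hθ : |θ| < 1) (hc : ∀ n, |(c n : ℝ)| ≤ Cb) (k t : ℕ)
    (hz : ∀ i, 1 ≤ i → i ≤ t → c (k+i) = 0) :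
    tl c θ k = θ^t * tl c θ (k+t) := by
  rw [tl_split hθ hc k t]
  have : ∀ i ∈ range t, (c (k+i+1) : ℝ) * θ^(i+1) = 0 := by
    intro i hi
    rw [Finset.mem_range] at hi
    have := hz (i+1) (by omega) (by omega)
    rw [show k + (i+1) = k + i + 1 from by omega] at this
    simp [this]
  rw [Finset.sum_congr rfl this]
  simp

lemma tl_abs_le_tl {c : ℕ → ℤ} {θ Cb : ℝ} (hθ : |θ| < 1) (hc : ∀ n, |(c n : ℝ)| ≤ Cb) (k : ℕ) :
    |tl c θ k| ≤ tl (fun n => |c n|) |θ| k := by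
  have hc' : ∀ n, |((|c n| : ℤ) : ℝ)| ≤ Cb := by
    intro n
    rw [Int.cast_abs, abs_abs]
    exact hc n
  have h1 : |tl c θ k| ≤ ∑' i : ℕ, ‖(c (k+i+1) : ℝ) * θ^(i+1)‖ := by
    rw [← Real.norm_eq_abs]
    exact norm_tsum_le_tsum_norm ((tl_summable hθ hc k).norm)
  apply h1.trans
  apply le_of_eq
  unfold tl
  congr 1
  ext i
  rw [norm_mul, norm_pow, Real.norm_eq_abs, Real.norm_eq_abs, Int.cast_abs]

lemma tl_le_tl {c c' : ℕ → ℤ} {θ Cb : ℝ} (hθ0 : 0 ≤ θ) (hθ : |θ| < 1)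
    (hc : ∀ n, |(c n : ℝ)| ≤ Cb) (hc' : ∀ n, |(c' n : ℝ)| ≤ Cb)
    (hle : ∀ n, c n ≤ c' n) (k : ℕ) : tl c θ k ≤ tl c' θ k := by
  apply Summable.tsum_le_tsum _ (tl_summable hθ hc k) (tl_summable hθ hc' k)
  intro i
  have h1 : ((c (k+i+1) : ℝ)) ≤ ((c' (k+i+1)) : ℝ) := by exact_mod_cast hle _
  have h2 : (0:ℝ) ≤ θ^(i+1) := by positivity
  nlinarith

/-- sparse tail bound -/
lemma tl_sparse {c : ℕ → ℤ} {θ Cb : ℝ} {N g : ℕ} (hθ0 : 0 < θ) (hθ : θ < 1) (hg : 1 ≤ g)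
    (hc : ∀ n, |(c n : ℝ)| ≤ Cb) (hnn : ∀ n, 0 ≤ c n)
    (h01 : ∀ n, N < n → c n = 0 ∨ c n = 1)
    (hgap : ∀ n m, N < n → n < m → c n = 1 → c m = 1 → n + g ≤ m)
    (hinf : ∀ m, ∃ n, m < n ∧ c n = 1) :
    ∀ k, N ≤ k → tl c θ k ≤ θ / (1 - θ^g) := by
  classical
  have hθa : |θ| < 1 := by rw [abs_of_pos hθ0]; exact hθ
  have hsumgeo : Summable (fun i : ℕ => θ^(i+1)) := by
    have := (summable_geometric_of_lt_one hθ0.le hθ).mul_left θ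
    apply this.congr
    intro i
    rw [pow_succ]
    ring
  have htsumgeo : ∑' i : ℕ, θ^(i+1) = θ / (1 - θ) := by
    have h1 : ∑' i : ℕ, θ^(i+1) = θ * ∑' i : ℕ, θ^i := by
      rw [← tsum_mul_left]
      congr 1; ext i; rw [pow_succ]; ring
    rw [h1, tsum_geometric_of_lt_one hθ0.le hθ, div_eq_mul_inv]
  have hub : ∀ k, N ≤ k → tl c θ k ≤ θ / (1 - θ) := by
    intro k hk
    rw [← htsumgeo]
    apply Summable.tsum_le_tsum _ (tl_summable hθa hc k) hsumgeo
    intro i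
    have h01' := h01 (k+i+1) (by omega)
    have hp : (0:ℝ) < θ^(i+1) := by positivity
    rcases h01' with h | h <;> rw [h] <;> simp [hp.le]
  set S : Set ℝ := (fun k : ℕ => tl c θ k) '' {k : ℕ | N ≤ k} with hS
  have hSne : S.Nonempty := ⟨tl c θ N, ⟨N, by simp, rfl⟩⟩
  have hSbdd : BddAbove S := by
    refine ⟨θ / (1 - θ), ?_⟩
    rintro _ ⟨k, hk, rfl⟩
    exact hub k hk
  set s := sSup S with hs
  have hles : ∀ k, N ≤ k → tl c θ k ≤ s := by
    intro k hk
    exact le_csSup hSbdd ⟨k, hk, rfl⟩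
  have key : ∀ k, N ≤ k → tl c θ k ≤ θ + θ^g * s := by
    intro k hk
    obtain ⟨hfind⟩ : ∃ _ : (∃ n, k < n ∧ c n = 1), True := ⟨hinf k, trivial⟩
    have hex : ∃ n, k < n ∧ c n = 1 := hinf k
    set n := Nat.find hex with hn
    obtain ⟨hkn, hcn⟩ := Nat.find_spec hex
    set t := n - k - 1 with ht
    have hkt : k + t = n - 1 := by omega
    have hz1 : ∀ i, 1 ≤ i → i ≤ t → c (k+i) = 0 := by
      intro i h1 h2
      have hlt : k + i < n := by omega
      have hnot := Nat.find_min hex hlt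
      rcases h01 (k+i) (by omega) with h | h
      · exact h
      · exact absurd ⟨by omega, h⟩ hnot
    have hz2 : ∀ i, 1 ≤ i → i ≤ g - 1 → c (n+i) = 0 := by
      intro i h1 h2
      rcases h01 (n+i) (by omega) with h | h
      · exact h
      · have := hgap n (n+i) (by omega) (by omega) hcn h
        omega
    have e1 : tl c θ k = θ^t * tl c θ (k+t) := tl_zrun hθa hc k t hz1
    have e2 : tl c θ (k+t) = θ + θ * tl c θ n := by
      have := tl_shift hθa hc (k+t)
      rw [show k + t + 1 = n from by omega] at this
      rw [this, hcn]
      simp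
    have e3 : tl c θ n = θ^(g-1) * tl c θ (n+(g-1)) := tl_zrun hθa hc n (g-1) hz2
    have e4 : tl c θ (n+(g-1)) ≤ s := hles _ (by omega)
    have hnn1 : 0 ≤ tl c θ (n+(g-1)) := tl_nonneg hθ0.le hnn _
    have hnn2 : 0 ≤ tl c θ (k+t) := tl_nonneg hθ0.le hnn _
    have hθt : θ^t ≤ 1 := pow_le_one₀ hθ0.le hθ.le
    have hθg1 : (0:ℝ) < θ^(g-1) := by positivity
    have hθgg : θ * θ^(g-1) = θ^g := by
      rw [← pow_succ']
      congr 1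
      omega
    calc tl c θ k = θ^t * tl c θ (k+t) := e1
      _ ≤ tl c θ (k+t) := by nlinarith
      _ = θ + θ * (θ^(g-1) * tl c θ (n+(g-1))) := by rw [e2, e3]
      _ = θ + θ^g * tl c θ (n+(g-1)) := by rw [← hθgg]; ring
      _ ≤ θ + θ^g * s := by nlinarith [pow_pos hθ0 g]
  have hθg : θ^g < 1 := pow_lt_one₀ hθ0.le hθ (by omega)
  have hsle : s ≤ θ + θ^g * s := by
    apply csSup_le hSne
    rintro _ ⟨k, hk, rfl⟩
    exact key k hk
  have hfin : s ≤ θ / (1 - θ^g) := by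
    rw [le_div_iff₀ (by linarith)]
    nlinarith
  intro k hk
  exact (hles k hk).trans hfin



variable {c : ℕ → ℤ} {β Cb : ℝ} {N : ℕ}

lemma theta_lt_one (hβ : 1 < β) : |β⁻¹| < 1 := by
  rw [abs_of_pos (by positivity)]
  rw [inv_lt_one_iff₀]; right; exact hβ

lemma theta_pos (hβ : 1 < β) : 0 < β⁻¹ := by positivity

lemma descent (hβ : 1 < β) (hc : ∀ n, |(c n : ℝ)| ≤ Cb) (hnn : ∀ n, 0 ≤ c n)
    (hx0 : tl c β⁻¹ 0 = 1)
    (hstar : ∀ k, 1 ≤ k → k < N →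
      ∃ j, 1 ≤ j ∧ k + j ≤ N ∧ (∀ i, 1 ≤ i → i < j → c (k+i) = c i) ∧ c (k+j) < c j)
    (hsparse : ∀ k, N ≤ k → tl c β⁻¹ k < 1) :
    ∀ k, 1 ≤ k → tl c β⁻¹ k < 1 := by
  set θ := β⁻¹ with hθdef
  have hθ0 : 0 < θ := theta_pos hβ
  have hθ1 : |θ| < 1 := theta_lt_one hβ
  suffices H : ∀ m k, 1 ≤ k → N ≤ k + m → tl c θ k < 1 by
    intro k hk
    exact H N k hk (by omega)
  intro m
  induction m with
  | zero => intro k hk hN; exact hsparse k (by omega)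
  | succ m ih =>
    intro k hk hN
    by_cases hkN : N ≤ k
    · exact hsparse k hkN
    · push_neg at hkN
      obtain ⟨j, hj1, hjN, hagree, hlt⟩ := hstar k hk hkN
      have hxkj : tl c θ (k+j) < 1 := by
        by_cases h2 : N ≤ k + j
        · exact hsparse _ h2
        · exact ih (k+j) (by omega) (by omega)
      have split1 := tl_split hθ1 hc k j
      have split0 := tl_split hθ1 hc 0 j
      rw [hx0] at split0
      simp only [zero_add] at split0
      -- difference of finite sums
      have hsumdiff : (∑ i ∈ range j, (c (k+i+1) : ℝ) * θ^(i+1))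
          - (∑ i ∈ range j, (c (i+1) : ℝ) * θ^(i+1)) ≤ -θ^j := by
        obtain ⟨j', rfl⟩ : ∃ j', j = j' + 1 := ⟨j - 1, by omega⟩
        rw [Finset.sum_range_succ, Finset.sum_range_succ]
        have heq : ∑ i ∈ range j', (c (k+i+1) : ℝ) * θ^(i+1)
            = ∑ i ∈ range j', (c (i+1) : ℝ) * θ^(i+1) := by
          apply Finset.sum_congr rfl
          intro i hi
          rw [Finset.mem_range] at hi
          rw [show k + i + 1 = k + (i+1) from by omega, hagree (i+1) (by omega) (by omega)]
        rw [heq]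
        have hcle : (c (k+j'+1) : ℝ) ≤ (c (j'+1) : ℝ) - 1 := by
          have : c (k + (j'+1)) ≤ c (j'+1) - 1 := by omega
          rw [show k + j' + 1 = k + (j'+1) from by omega]
          exact_mod_cast this
        have hp : (0:ℝ) < θ^(j'+1) := by positivity
        nlinarith
      have hxj : 0 ≤ tl c θ j := tl_nonneg hθ0.le hnn j
      have hp : (0:ℝ) < θ^j := by positivity
      -- x_k − 1 ≤ θ^j (x_{k+j} − 1)
      nlinarith [split1, split0, hsumdiff, hxkj, hxj]

lemma digits_eq (hβ : 1 < β) (hc : ∀ n, |(c n : ℝ)| ≤ Cb) (hnn : ∀ n, 0 ≤ c n)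
    (hx0 : tl c β⁻¹ 0 = 1) (hxlt : ∀ k, 1 ≤ k → tl c β⁻¹ k < 1) :
    (∀ k : ℕ, (tau β)^[k] 1 = tl c β⁻¹ k) ∧ (∀ k : ℕ, dig β 1 (k+1) = c (k+1)) := by
  set θ := β⁻¹ with hθdef
  have hθ0 : 0 < θ := theta_pos hβ
  have hθ1 : |θ| < 1 := theta_lt_one hβ
  have hβ0 : (β:ℝ) ≠ 0 := by positivity
  have hmul : ∀ k, β * tl c θ k = (c (k+1) : ℝ) + tl c θ (k+1) := by
    intro k
    rw [tl_shift hθ1 hc k]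
    have hbt : β * θ = 1 := by rw [hθdef]; field_simp
    linear_combination ((c (k+1) : ℝ) + tl c θ (k+1)) * hbt
  have hiter : ∀ k : ℕ, (tau β)^[k] 1 = tl c θ k := by
    intro k
    induction k with
    | zero => simp [hx0]
    | succ k ih =>
      rw [Function.iterate_succ_apply', ih]
      unfold tau
      have hfl : ⌊β * tl c θ k⌋ = c (k+1) := by
        rw [hmul k]
        rw [Int.floor_eq_iff]
        constructor
        · have := tl_nonneg hθ0.le hnn (k+1); push_cast; linarith
        · have := hxlt (k+1) (by omega); push_cast; linarith
      rw [hfl, hmul k]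
      ring
  refine ⟨hiter, fun k => ?_⟩
  have : dig β 1 (k+1) = ⌊β * (tau β)^[k] 1⌋ := by simp [dig]
  rw [this, hiter k, hmul k]
  rw [Int.floor_eq_iff]
  constructor
  · have := tl_nonneg hθ0.le hnn (k+1); push_cast; linarith
  · have := hxlt (k+1) (by omega); push_cast; linarith


end BZ

namespace BZ
open Finset

def adj (j : ℕ) : ℕ := if j % 2 = 1 then 1 else 2

def blk (N g D : ℕ) : ℕ → ℕ × ℕ
  | 0 => (2*N + 2, 0)
  | j+1 =>
    let pc := blk N g D j
    let L := 2*(D + pc.2) + 42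
    (32*(pc.1 + g*L)^2 + adj (j+1), pc.2 + L)

variable (N g D : ℕ)

def bp (j : ℕ) : ℕ := (blk N g D j).1
def bcum (j : ℕ) : ℕ := (blk N g D j).2
def bL (j : ℕ) : ℕ := 2*(D + bcum N g D j) + 42
def bP (j : ℕ) : ℕ := bp N g D j + g * bL N g D j
def bE (j : ℕ) : ℕ := bp N g D j + (bL N g D j - 1) * g
def IsOne (n : ℕ) : Prop := ∃ j m, m < bL N g D j ∧ n = bp N g D j + m * g

lemma bp_zero : bp N g D 0 = 2*N + 2 := rfl
lemma bcum_zero : bcum N g D 0 = 0 := rfl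
lemma bp_succ (j : ℕ) : bp N g D (j+1) = 32*(bP N g D j)^2 + adj (j+1) := rfl
lemma bcum_succ (j : ℕ) : bcum N g D (j+1) = bcum N g D j + bL N g D j := rfl

lemma bL_ge (j : ℕ) : 42 ≤ bL N g D j := by unfold bL; omega

variable {N g D}
variable (hg1 : 1 ≤ g) (hgN : g ≤ 2*N + 2)

include hg1 in
lemma bE_lt_bP (j : ℕ) : bE N g D j < bP N g D j := by
  unfold bE bP
  have := bL_ge N g D j
  obtain ⟨l, hl⟩ : ∃ l, bL N g D j = l + 1 := ⟨bL N g D j - 1, by omega⟩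
  rw [hl]
  have h1 : l * g < g * (l+1) := by nlinarith
  have h2 : (l + 1 - 1) * g = l * g := by
    congr 1
  omega

lemma bp_ge_base (j : ℕ) : 2*N + 2 + j ≤ bp N g D j := by
  induction j with
  | zero => simp [bp_zero]
  | succ j ih =>
    rw [bp_succ]
    have hP : bp N g D j ≤ bP N g D j := Nat.le_add_right _ _
    have : bP N g D j ≥ 2*N+2+j := le_trans ih hP
    have h32 : bP N g D j + 1 ≤ 32 * (bP N g D j)^2 := by nlinarith
    have : 1 ≤ adj (j+1) := by unfold adj; split <;> omega
    omega

omit hg1 in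
include hgN in
lemma bP_lt_bp_succ (j : ℕ) : bP N g D j + g ≤ bp N g D (j+1) := by
  rw [bp_succ]
  have hbase := bp_ge_base (N:=N) (g:=g) (D:=D) j
  have hP : 2*N+2 ≤ bP N g D j := by
    have : bp N g D j ≤ bP N g D j := Nat.le_add_right _ _
    omega
  have hgP : g ≤ bP N g D j := by omega
  have : 1 ≤ adj (j+1) := by unfold adj; split <;> omega
  nlinarith

include hg1 hgN in
lemma bp_strictMono : StrictMono (bp N g D) := by
  apply strictMono_nat_of_lt_succ
  intro j
  have h1 := bP_lt_bp_succ (N:=N) (D:=D) hgN (j:=j)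
  have h2 : bp N g D j ≤ bP N g D j := Nat.le_add_right _ _
  omega

include hg1 hgN in
lemma bE_lt_bp_of_lt {i j : ℕ} (hij : i < j) : bE N g D i + g ≤ bp N g D j := by
  have h1 : bE N g D i < bP N g D i := bE_lt_bP hg1 i
  have h2 : bP N g D i + g ≤ bp N g D (i+1) := bP_lt_bp_succ hgN i
  have h3 : bp N g D (i+1) ≤ bp N g D j := (bp_strictMono hg1 hgN).le_iff_le.mpr hij
  omega

include hg1 hgN in
lemma isOne_gap {n n' : ℕ} (h : IsOne N g D n) (h' : IsOne N g D n') (hlt : n < n') :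
    n + g ≤ n' := by
  obtain ⟨j, m, hm, rfl⟩ := h
  obtain ⟨j', m', hm', rfl⟩ := h'
  rcases lt_trichotomy j j' with hj | rfl | hj
  · have h1 : bp N g D j + m * g ≤ bE N g D j := by
      unfold bE
      have : m * g ≤ (bL N g D j - 1) * g := Nat.mul_le_mul_right _ (by omega)
      omega
    have := bE_lt_bp_of_lt (N:=N) (D:=D) hg1 hgN hj
    omega
  · have : m < m' := by
      by_contra hc
      push_neg at hc
      have : m' * g ≤ m * g := Nat.mul_le_mul_right _ hc
      omega
    have : (m+1) * g ≤ m' * g := Nat.mul_le_mul_right _ (by omega)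
    have : m * g + g ≤ m' * g := by
      have h2 : (m+1)*g = m*g + g := by ring
      omega
    omega
  · exfalso
    have h1 : bp N g D j' + m' * g ≤ bE N g D j' := by
      unfold bE
      have : m' * g ≤ (bL N g D j' - 1) * g := Nat.mul_le_mul_right _ (by omega)
      omega
    have := bE_lt_bp_of_lt (N:=N) (D:=D) hg1 hgN hj
    omega

lemma isOne_ge {n : ℕ} (h : IsOne N g D n) : 2*N + 2 ≤ n := by
  obtain ⟨j, m, hm, rfl⟩ := h
  have := bp_ge_base (N:=N) (g:=g) (D:=D) (j:=j)
  omega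

lemma isOne_unbounded (m : ℕ) : ∃ n, m < n ∧ IsOne N g D n := by
  refine ⟨bp N g D (m+1), ?_, ⟨m+1, 0, by have := bL_ge N g D (m+1); omega, by simp⟩⟩
  have := bp_ge_base (N:=N) (g:=g) (D:=D) (j:=m+1)
  omega

include hg1 hgN in
lemma isOne_mid {n j : ℕ} (hn1 : bp N g D j ≤ n) (hn2 : n < bp N g D (j+1)) :
    IsOne N g D n ↔ ∃ m, m < bL N g D j ∧ n = bp N g D j + m * g := by
  constructor
  · rintro ⟨j', m', hm', rfl⟩
    rcases lt_trichotomy j' j with hj | rfl | hj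
    · exfalso
      have h1 : bp N g D j' + m' * g ≤ bE N g D j' := by
        unfold bE
        have : m' * g ≤ (bL N g D j' - 1) * g := Nat.mul_le_mul_right _ (by omega)
        omega
      have := bE_lt_bp_of_lt (N:=N) (D:=D) hg1 hgN hj
      omega
    · exact ⟨m', hm', rfl⟩
    · exfalso
      have h3 : bp N g D (j+1) ≤ bp N g D j' := (bp_strictMono hg1 hgN).le_iff_le.mpr hj
      omega
  · rintro ⟨m, hm, rfl⟩
    exact ⟨j, m, hm, rfl⟩

include hg1 hgN in
lemma isOne_parity (hg2 : g % 2 = 0) {n j : ℕ} (hn1 : bp N g D j ≤ n) (hn2 : n < bp N g D (j+1))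
    (h : IsOne N g D n) : n % 2 = j % 2 := by
  have hpar : ∀ j', bp N g D j' % 2 = j' % 2 := by
    intro j'
    induction j' with
    | zero => rw [bp_zero]; omega
    | succ j' ih =>
      rw [bp_succ]
      have : adj (j'+1) % 2 = (j'+1) % 2 := by unfold adj; split <;> omega
      omega
  obtain ⟨m, hm, rfl⟩ := (isOne_mid hg1 hgN hn1 hn2).mp h
  have := hpar j
  have hmg : m * g % 2 = 0 := by rw [Nat.mul_mod, hg2]; simp
  omega

end BZ

namespace BZ
open Finset

variable {N g D : ℕ} {e : ℕ → ℤ}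

open Classical in
noncomputable def cseq (e : ℕ → ℤ) (N g D : ℕ) (n : ℕ) : ℤ :=
  if n ≤ N then e n else if IsOne N g D n then 1 else 0

lemma cseq_of_le {n : ℕ} (hn : n ≤ N) : cseq e N g D n = e n := by
  unfold cseq; rw [if_pos hn]

open Classical in
lemma cseq_of_gt {n : ℕ} (hn : N < n) :
    cseq e N g D n = if IsOne N g D n then 1 else 0 := by
  unfold cseq; rw [if_neg (by omega)]

lemma cseq_01 (n : ℕ) (hn : N < n) : cseq e N g D n = 0 ∨ cseq e N g D n = 1 := by
  rw [cseq_of_gt hn]; split <;> simp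

lemma cseq_nonneg (he : ∀ n, 0 ≤ e n) (n : ℕ) : 0 ≤ cseq e N g D n := by
  by_cases hn : n ≤ N
  · rw [cseq_of_le hn]; exact he n
  · rcases cseq_01 (N:=N) (g:=g) (D:=D) (e:=e) n (by omega) with h | h <;> omega

lemma cseq_abs_le {Cb : ℝ} (he : ∀ n, |(e n : ℝ)| ≤ Cb) (hCb : 1 ≤ Cb) (n : ℕ) :
    |(cseq e N g D n : ℝ)| ≤ Cb := by
  by_cases hn : n ≤ N
  · rw [cseq_of_le hn]; exact he n
  · rcases cseq_01 (N:=N) (g:=g) (D:=D) (e:=e) n (by omega) with h | h <;> rw [h] <;> simp <;> linarith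

lemma cseq_eq_one {n : ℕ} (hn : N < n) (h : IsOne N g D n) : cseq e N g D n = 1 := by
  rw [cseq_of_gt hn, if_pos h]

lemma cseq_isOne {n : ℕ} (hn : N < n) (h : cseq e N g D n = 1) : IsOne N g D n := by
  rw [cseq_of_gt hn] at h
  by_contra hc
  rw [if_neg hc] at h
  exact absurd h (by omega)

lemma cseq_gap (hg1 : 1 ≤ g) (hgN : g ≤ 2*N+2) :
    ∀ n m, N < n → n < m → cseq e N g D n = 1 → cseq e N g D m = 1 → n + g ≤ m := by
  intro n m hn hnm h1 h2
  exact isOne_gap hg1 hgN (cseq_isOne hn h1) (cseq_isOne (by omega) h2) hnm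

lemma cseq_one_unbounded : ∀ m, ∃ n, m < n ∧ cseq e N g D n = 1 := by
  intro m
  obtain ⟨n, hn, hone⟩ := isOne_unbounded (N:=N) (g:=g) (D:=D) (max m N)
  have hN : N < n := by
    have := isOne_ge hone; omega
  exact ⟨n, by omega, cseq_eq_one hN hone⟩

lemma cseq_zero_between (hg1 : 1 ≤ g) (hgN : g ≤ 2*N+2) {j n : ℕ}
    (h1 : bE N g D j < n) (h2 : n < bp N g D (j+1)) : cseq e N g D n = 0 := by
  have hbp : bp N g D j ≤ bE N g D j := Nat.le_add_right _ _
  have hN : N < n := by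
    have := bp_ge_base (N:=N) (g:=g) (D:=D) j
    omega
  rw [cseq_of_gt hN, if_neg]
  intro hone
  obtain ⟨m, hm, rfl⟩ := (isOne_mid hg1 hgN (by omega) h2).mp hone
  have : m * g ≤ (bL N g D j - 1) * g := Nat.mul_le_mul_right _ (by omega)
  unfold bE at h1
  omega

lemma cseq_zero_low {n : ℕ} (h1 : N < n) (h2 : n < bp N g D 0) : cseq e N g D n = 0 := by
  rw [cseq_of_gt h1, if_neg]
  intro hone
  have := isOne_ge hone
  rw [bp_zero] at h2
  omega

lemma sum_shift {M : Type*} [AddCommMonoid M] (h : ℕ → M) (a b : ℕ) :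
    ∑ n ∈ Ico a b, h (n+1) = ∑ n ∈ Ico (a+1) (b+1), h n := by
  rw [Finset.sum_Ico_eq_sum_range, Finset.sum_Ico_eq_sum_range]
  have : b + 1 - (a + 1) = b - a := by omega
  rw [this]
  apply Finset.sum_congr rfl
  intro i _
  congr 1
  omega

lemma block_sum (hg1 : 1 ≤ g) (hgN : g ≤ 2*N+2) (f : ℕ → ℝ) (j : ℕ) :
    ∑ n ∈ Ico (bp N g D j) (bE N g D j + 1), (cseq e N g D n : ℝ) * f n
      = ∑ m ∈ range (bL N g D j), f (bp N g D j + m * g) := by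
  classical
  set T : Finset ℕ := (range (bL N g D j)).image (fun m => bp N g D j + m * g) with hT
  have hsub : T ⊆ Ico (bp N g D j) (bE N g D j + 1) := by
    intro n hn
    rw [hT, Finset.mem_image] at hn
    obtain ⟨m, hm, rfl⟩ := hn
    rw [Finset.mem_range] at hm
    rw [Finset.mem_Ico]
    constructor
    · omega
    · have : m * g ≤ (bL N g D j - 1) * g := Nat.mul_le_mul_right _ (by omega)
      unfold bE
      omega
  have hNlt : ∀ n ∈ Ico (bp N g D j) (bE N g D j + 1), N < n := by
    intro n hn
    rw [Finset.mem_Ico] at hn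
    have := bp_ge_base (N:=N) (g:=g) (D:=D) j
    omega
  have hzero : ∀ n ∈ Ico (bp N g D j) (bE N g D j + 1), n ∉ T → (cseq e N g D n : ℝ) * f n = 0 := by
    intro n hn hnT
    rw [Finset.mem_Ico] at hn
    have hcz : cseq e N g D n = 0 := by
      rw [cseq_of_gt (hNlt n (by rw [Finset.mem_Ico]; omega)), if_neg]
      intro hone
      have hlt : n < bp N g D (j+1) := by
        have h1 : bE N g D j < bP N g D j := bE_lt_bP hg1 j
        have h2 := bP_lt_bp_succ (N:=N) (D:=D) hgN j
        omega
      obtain ⟨m, hm, rfl⟩ := (isOne_mid hg1 hgN hn.1 hlt).mp hone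
      apply hnT
      rw [hT, Finset.mem_image]
      exact ⟨m, Finset.mem_range.mpr hm, rfl⟩
    rw [hcz]
    simp
  rw [← Finset.sum_subset hsub hzero]
  have hinj : ∀ a ∈ range (bL N g D j), ∀ b ∈ range (bL N g D j),
      bp N g D j + a * g = bp N g D j + b * g → a = b := by
    intro a _ b _ h
    have h2 : a * g = b * g := by omega
    exact Nat.eq_of_mul_eq_mul_right (by omega) h2
  rw [hT, Finset.sum_image hinj]
  apply Finset.sum_congr rfl
  intro m hm
  rw [Finset.mem_range] at hm
  have hone : IsOne N g D (bp N g D j + m * g) := ⟨j, m, hm, rfl⟩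
  have hN : N < bp N g D j + m * g := by
    have := bp_ge_base (N:=N) (g:=g) (D:=D) j
    omega
  rw [cseq_eq_one hN hone]
  simp

lemma count_le (hg1 : 1 ≤ g) (hgN : g ≤ 2*N+2) (he : ∀ n, 0 ≤ e n)
    (hDe : ∑ n ∈ range N, e (n+1) ≤ (D:ℤ)) (j : ℕ) :
    ∑ n ∈ Ico 1 (bp N g D j), cseq e N g D n ≤ (D:ℤ) + bcum N g D j := by
  induction j with
  | zero =>
    rw [bp_zero, bcum_zero]
    have hsplit : ∑ n ∈ Ico 1 (N+1), cseq e N g D n + ∑ n ∈ Ico (N+1) (2*N+2), cseq e N g D n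
        = ∑ n ∈ Ico 1 (2*N+2), cseq e N g D n := Finset.sum_Ico_consecutive _ (by omega) (by omega)
    have h1 : ∑ n ∈ Ico 1 (N+1), cseq e N g D n = ∑ n ∈ range N, e (n+1) := by
      rw [Finset.sum_Ico_eq_sum_range]
      have : N + 1 - 1 = N := by omega
      rw [this]
      apply Finset.sum_congr rfl
      intro i hi
      rw [Finset.mem_range] at hi
      rw [show 1 + i = i + 1 from by omega, cseq_of_le (by omega)]
    have h2 : ∑ n ∈ Ico (N+1) (2*N+2), cseq e N g D n = 0 := by
      apply Finset.sum_eq_zero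
      intro n hn
      rw [Finset.mem_Ico] at hn
      exact cseq_zero_low (by omega) (by rw [bp_zero]; omega)
    push_cast
    omega
  | succ j ih =>
    have hble : bp N g D j ≤ bp N g D (j+1) := ((bp_strictMono hg1 hgN).le_iff_le).mpr (by omega)
    have hsplit : ∑ n ∈ Ico 1 (bp N g D j), cseq e N g D n
        + ∑ n ∈ Ico (bp N g D j) (bp N g D (j+1)), cseq e N g D n
        = ∑ n ∈ Ico 1 (bp N g D (j+1)), cseq e N g D n := by
      apply Finset.sum_Ico_consecutive
      · have := bp_ge_base (N:=N) (g:=g) (D:=D) j; omega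
      · exact hble
    have hmid : ∑ n ∈ Ico (bp N g D j) (bp N g D (j+1)), cseq e N g D n ≤ (bL N g D j : ℤ) := by
      have hEb : bE N g D j + 1 ≤ bp N g D (j+1) := by
        have h1 : bE N g D j < bP N g D j := bE_lt_bP hg1 j
        have h2 := bP_lt_bp_succ (N:=N) (D:=D) hgN j
        omega
      have hsplit2 : ∑ n ∈ Ico (bp N g D j) (bE N g D j + 1), cseq e N g D n
          + ∑ n ∈ Ico (bE N g D j + 1) (bp N g D (j+1)), cseq e N g D n
          = ∑ n ∈ Ico (bp N g D j) (bp N g D (j+1)), cseq e N g D n := by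
        apply Finset.sum_Ico_consecutive
        · unfold bE; omega
        · exact hEb
      have hz : ∑ n ∈ Ico (bE N g D j + 1) (bp N g D (j+1)), cseq e N g D n = 0 := by
        apply Finset.sum_eq_zero
        intro n hn
        rw [Finset.mem_Ico] at hn
        exact cseq_zero_between hg1 hgN (by omega) hn.2
      have hblk : (∑ n ∈ Ico (bp N g D j) (bE N g D j + 1), ((cseq e N g D n : ℝ)) * (1:ℝ))
          = ∑ m ∈ range (bL N g D j), (1:ℝ) := block_sum hg1 hgN (fun _ => (1:ℝ)) j
      have hblk' : ∑ n ∈ Ico (bp N g D j) (bE N g D j + 1), cseq e N g D n = (bL N g D j : ℤ) := by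
        have : ((∑ n ∈ Ico (bp N g D j) (bE N g D j + 1), cseq e N g D n : ℤ) : ℝ)
            = ((bL N g D j : ℤ) : ℝ) := by
          push_cast
          simpa using hblk
        exact_mod_cast this
      omega
    rw [← hsplit] at *
    rw [bcum_succ]
    push_cast
    omega

end BZ

namespace BZ
open Finset

noncomputable def epre (β₀ : ℝ) (N : ℕ) : ℕ → ℤ :=
  fun n => if n = N then dig β₀ 1 N - 1 else dig β₀ 1 n

noncomputable def Dpre (β₀ : ℝ) (N : ℕ) : ℕ :=
  (∑ n ∈ range N, epre β₀ N (n+1)).toNat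

lemma contOn_tsum {s : Set ℝ} (f : ℕ → ℝ → ℝ) (u : ℕ → ℝ) (hu : Summable u)
    (hf : ∀ n, ContinuousOn (f n) s) (hb : ∀ n, ∀ x ∈ s, ‖f n x‖ ≤ u n) :
    ContinuousOn (fun x => ∑' n, f n x) s := by
  rw [continuousOn_iff_continuous_restrict]
  have heq : Set.restrict s (fun x => ∑' n, f n x) = fun x : s => ∑' n, f n x.val := rfl
  show Continuous (fun x : s => ∑' n, f n x.val)
  exact continuous_tsum (fun n => continuousOn_iff_continuous_restrict.mp (hf n)) hu
    (fun n x => hb n x.val x.2)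

lemma dig_abs_le {β₀ : ℝ} (hβ₀ : 1 < β₀) (n : ℕ) : |(dig β₀ 1 n : ℝ)| ≤ β₀ := by
  cases n with
  | zero =>
    have h0 : dig β₀ 1 0 = ⌊β₀⌋ := by simp [dig]
    rw [h0, abs_of_nonneg]
    · exact (Int.floor_le β₀)
    · have : (0:ℤ) ≤ ⌊β₀⌋ := Int.floor_nonneg.mpr (by linarith)
      exact_mod_cast this
  | succ k =>
    rw [abs_of_nonneg]
    · exact dig_le_beta hβ₀ k
    · have := dig_nonneg (show (0:ℝ) < β₀ by linarith) k
      exact_mod_cast this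

lemma epre_nonneg {β₀ : ℝ} (hβ₀ : 1 < β₀) {N : ℕ} (hdN : 1 ≤ dig β₀ 1 N) (n : ℕ) :
    0 ≤ epre β₀ N n := by
  unfold epre
  split
  · omega
  · cases n with
    | zero => exact Int.floor_nonneg.mpr (by simp [dig]; linarith) |>.trans (le_of_eq rfl) |>.trans (le_refl _)
    | succ k => exact dig_nonneg (by linarith) k

lemma epre_abs_le {β₀ : ℝ} (hβ₀ : 1 < β₀) {N : ℕ} (hdN : 1 ≤ dig β₀ 1 N) (n : ℕ) :
    |(epre β₀ N n : ℝ)| ≤ β₀ := by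
  unfold epre
  split
  · rename_i h
    rw [abs_of_nonneg (by exact_mod_cast (by omega : (0:ℤ) ≤ dig β₀ 1 N - 1))]
    have := dig_abs_le hβ₀ N
    rw [abs_of_nonneg (by exact_mod_cast (by omega : (0:ℤ) ≤ dig β₀ 1 N))] at this
    push_cast
    linarith
  · exact dig_abs_le hβ₀ n

theorem exists_good_beta {β₀ lam B : ℝ} {N g : ℕ} (hβ₀ : 1 < β₀)
    (hlam : 1 < lam) (hlamβ : lam < β₀) (hB : β₀ < B) (hB2 : B ≤ 2*β₀)
    (hg1 : 1 ≤ g) (hgN : g ≤ 2*N+2) (hN1 : 1 ≤ N)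
    (hρ : lam⁻¹ + (lam⁻¹)^g < 1)
    (hdN : 1 ≤ dig β₀ 1 N)
    (hNlow : (β₀⁻¹)^N < (β₀ - lam)/(4*β₀))
    (hNup : (β₀⁻¹)^N < (B - β₀)/B) :
    ∃ β : ℝ, lam ≤ β ∧ β ≤ B ∧ 1 < β ∧
      (∀ n : ℕ, dig β 1 (n+1) = cseq (epre β₀ N) N g (Dpre β₀ N) (n+1)) := by
  classical
  set e := epre β₀ N with he_def
  set D := Dpre β₀ N with hD_def
  set c := cseq e N g D with hc_def
  have he_nn : ∀ n, 0 ≤ e n := epre_nonneg hβ₀ hdN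
  have he_ab : ∀ n, |(e n : ℝ)| ≤ β₀ := epre_abs_le hβ₀ hdN
  have hCb : (1:ℝ) ≤ β₀ := hβ₀.le
  have hc_nn : ∀ n, 0 ≤ c n := cseq_nonneg he_nn
  have hc_ab : ∀ n, |(c n : ℝ)| ≤ β₀ := cseq_abs_le he_ab hCb
  have hDe : ∑ n ∈ range N, e (n+1) ≤ (D:ℤ) := by
    rw [hD_def]
    unfold Dpre
    rw [← he_def]
    exact Int.self_le_toNat _
  -- F and its continuity
  set F : ℝ → ℝ := fun x => tl c x⁻¹ 0 with hF_def
  have hxinv : ∀ x : ℝ, lam ≤ x → (0 < x⁻¹ ∧ x⁻¹ < 1 ∧ |x⁻¹| < 1) := by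
    intro x hx
    have hx1 : 1 < x := lt_of_lt_of_le hlam hx
    have h0 : 0 < x⁻¹ := by positivity
    have h1 : x⁻¹ < 1 := by rw [inv_lt_one_iff₀]; right; exact hx1
    exact ⟨h0, h1, by rw [abs_of_pos h0]; exact h1⟩
  have hFcont : ContinuousOn F (Set.Icc lam B) := by
    have hFeq : F = fun x => ∑' n : ℕ, (c (n+1) : ℝ) * (x⁻¹)^(n+1) := by
      funext x
      rw [hF_def]
      show tl c x⁻¹ 0 = _
      unfold tl
      congr 1
      funext i
      rw [zero_add]
    rw [hFeq]
    apply contOn_tsum _ (fun n => β₀ * (lam⁻¹)^(n+1))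
    · apply Summable.mul_left
      have h1 : |lam⁻¹| < 1 := (hxinv lam le_rfl).2.2
      have := (summable_geometric_of_lt_one (abs_nonneg lam⁻¹) h1).mul_left |lam⁻¹|
      have h2 : Summable (fun n : ℕ => |lam⁻¹| * |lam⁻¹|^n) := this
      apply Summable.of_norm
      apply Summable.of_nonneg_of_le (fun n => norm_nonneg _) _ h2
      intro n
      rw [Real.norm_eq_abs, abs_pow, pow_succ]
      ring_nf
      exact le_refl _
    · intro n
      apply ContinuousOn.mul continuousOn_const
      apply ContinuousOn.pow
      exact ContinuousOn.inv₀ continuousOn_id (fun x hx => by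
        have := hx.1; intro h; rw [h] at this; linarith)
    · intro n x hx
      rw [Real.norm_eq_abs, abs_mul, abs_pow]
      have h1 : |(c (n+1) : ℝ)| ≤ β₀ := hc_ab _
      have h2 : |x⁻¹| ≤ lam⁻¹ := by
        rw [abs_of_pos (hxinv x hx.1).1]
        exact inv_anti₀ (by linarith) hx.1
      have h3 : |x⁻¹|^(n+1) ≤ (lam⁻¹)^(n+1) := pow_le_pow_left₀ (abs_nonneg _) h2 _
      have h4 : (0:ℝ) ≤ |x⁻¹|^(n+1) := by positivity
      nlinarith [abs_nonneg ((c (n+1) : ℝ))]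
  -- sparse tail bound, for any x in [lam, B]
  have hsparse : ∀ x : ℝ, lam ≤ x → ∀ k, N ≤ k → tl c x⁻¹ k ≤ lam⁻¹ / (1 - (lam⁻¹)^g) := by
    intro x hx k hk
    obtain ⟨h0, h1, _⟩ := hxinv x hx
    have hb := tl_sparse (c:=c) (N:=N) (g:=g) h0 h1 hg1 hc_ab hc_nn
      (fun n hn => cseq_01 n hn) (cseq_gap hg1 hgN) (cseq_one_unbounded) k hk
    apply hb.trans
    have hxl : x⁻¹ ≤ lam⁻¹ := inv_anti₀ (by linarith) hx
    have hgl : (x⁻¹)^g ≤ (lam⁻¹)^g := pow_le_pow_left₀ h0.le hxl _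
    have hl1 : (lam⁻¹)^g < 1 := by
      have : 0 < lam⁻¹ := by positivity
      nlinarith
    have hden : 0 < 1 - (lam⁻¹)^g := by linarith
    apply div_le_div₀ (by positivity) hxl (by linarith) (by linarith)
  have hρ0lt : lam⁻¹ / (1 - (lam⁻¹)^g) < 1 := by
    have hden : 0 < 1 - (lam⁻¹)^g := by
      have h0 : 0 < lam⁻¹ := by positivity
      nlinarith
    rw [div_lt_one hden]
    linarith
  set ρ0 := lam⁻¹ / (1 - (lam⁻¹)^g) with hρ0_def
  have hρ0nn : 0 ≤ ρ0 := by
    have h0 : (0:ℝ) < lam⁻¹ := by positivity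
    have hden : 0 < 1 - (lam⁻¹)^g := by nlinarith
    positivity
  -- split of F at N, and prefix identity
  have hsplitF : ∀ x : ℝ, lam ≤ x →
      F x = (∑ n ∈ range N, (c (n+1):ℝ) * (x⁻¹)^(n+1)) + (x⁻¹)^N * tl c x⁻¹ N := by
    intro x hx
    have h := tl_split (hxinv x hx).2.2 hc_ab 0 N
    rw [hF_def]
    simp only [zero_add] at h
    exact h
  have hprefix_eq : ∀ x : ℝ, x ≠ 0 →
      (∑ n ∈ range N, (c (n+1):ℝ) * (x⁻¹)^(n+1))
        = (∑ n ∈ range N, (dig β₀ 1 (n+1):ℝ) * (x⁻¹)^(n+1)) - (x⁻¹)^N := by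
    intro x hx
    obtain ⟨N', rfl⟩ : ∃ N', N = N' + 1 := ⟨N - 1, by omega⟩
    rw [Finset.sum_range_succ, Finset.sum_range_succ]
    have hsame : ∀ n ∈ range N', (c (n+1):ℝ) * (x⁻¹)^(n+1)
        = (dig β₀ 1 (n+1):ℝ) * (x⁻¹)^(n+1) := by
      intro n hn
      rw [Finset.mem_range] at hn
      have h1 : c (n+1) = e (n+1) := cseq_of_le (by omega)
      have h2 : e (n+1) = dig β₀ 1 (n+1) := by
        rw [he_def]; unfold epre; rw [if_neg (by omega)]
      rw [h1, h2]
    rw [Finset.sum_congr rfl hsame]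
    have hlast : c (N'+1) = dig β₀ 1 (N'+1) - 1 := by
      rw [hc_def, cseq_of_le (by omega), he_def]
      unfold epre
      rw [if_pos rfl]
    rw [hlast]
    push_cast
    ring
  have hθ0 : (0:ℝ) < β₀⁻¹ := by positivity
  have hPS := partial_sum (show (0:ℝ) < β₀ by linarith) N
  have hτN0 : 0 ≤ (tau β₀)^[N] 1 := iter_nonneg β₀ N
  have hτN1 : (tau β₀)^[N] 1 ≤ 1 := iter_le_one β₀ N
  have hθ0N : (0:ℝ) < (β₀⁻¹)^N := by positivity
  -- F lam > 1
  have hFlam : 1 < F lam := by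
    have hx := hsplitF lam le_rfl
    have htail : 0 ≤ (lam⁻¹)^N * tl c lam⁻¹ N := by
      have := tl_nonneg (hxinv lam le_rfl).1.le hc_nn N
      positivity
    have hpre := hprefix_eq lam (by linarith)
    -- termwise ratio bound
    have hterm : ∀ n ∈ range N, (c (n+1):ℝ) * (β₀/lam) * (β₀⁻¹)^(n+1)
        ≤ (c (n+1):ℝ) * (lam⁻¹)^(n+1) := by
      intro n hn
      have hcnn : (0:ℝ) ≤ (c (n+1) : ℝ) := by exact_mod_cast hc_nn (n+1)
      have hratio : (β₀/lam) * (β₀⁻¹)^(n+1) ≤ (lam⁻¹)^(n+1) := by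
        have h1 : (lam⁻¹)^(n+1) = (β₀⁻¹)^(n+1) * (β₀/lam)^(n+1) := by
          rw [← mul_pow]
          congr 1
          field_simp
        rw [h1]
        have h2 : (β₀/lam) ≤ (β₀/lam)^(n+1) := by
          apply le_self_pow₀
          · rw [le_div_iff₀ (by linarith)]; linarith
          · omega
        have h3 : (0:ℝ) ≤ (β₀⁻¹)^(n+1) := by positivity
        calc (β₀/lam) * (β₀⁻¹)^(n+1) ≤ (β₀/lam)^(n+1) * (β₀⁻¹)^(n+1) :=
              mul_le_mul_of_nonneg_right h2 h3
          _ = (β₀⁻¹)^(n+1) * (β₀/lam)^(n+1) := by ring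
      nlinarith
    have hsum : (β₀/lam) * (∑ n ∈ range N, (c (n+1):ℝ) * (β₀⁻¹)^(n+1))
        ≤ ∑ n ∈ range N, (c (n+1):ℝ) * (lam⁻¹)^(n+1) := by
      rw [Finset.mul_sum]
      apply Finset.sum_le_sum
      intro n hn
      have := hterm n hn
      nlinarith [this]
    have hpreβ₀ : (∑ n ∈ range N, (c (n+1):ℝ) * (β₀⁻¹)^(n+1))
        = 1 - (tau β₀)^[N] 1 * (β₀⁻¹)^N - (β₀⁻¹)^N := by
      rw [hprefix_eq β₀ (by linarith), hPS]
    have hlow : 1 - 2*(β₀⁻¹)^N ≤ ∑ n ∈ range N, (c (n+1):ℝ) * (β₀⁻¹)^(n+1) := by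
      rw [hpreβ₀]
      nlinarith
    have hfinal : 1 < (β₀/lam) * (1 - 2*(β₀⁻¹)^N) := by
      rw [div_mul_eq_mul_div, lt_div_iff₀ (by linarith)]
      have h4b : (0:ℝ) < 4*β₀ := by linarith
      have h9 := mul_lt_mul_of_pos_right hNlow h4b
      rw [div_eq_mul_inv, mul_assoc, inv_mul_cancel₀ (ne_of_gt h4b), mul_one] at h9
      nlinarith
    have hchain : (β₀/lam) * (1 - 2*(β₀⁻¹)^N)
        ≤ ∑ n ∈ range N, (c (n+1):ℝ) * (lam⁻¹)^(n+1) := by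
      apply le_trans _ hsum
      have hrpos : 0 < β₀/lam := by positivity
      nlinarith
    rw [hx]
    linarith
  -- F B < 1
  have hFB : F B < 1 := by
    have hx := hsplitF B (by linarith)
    have hBpos : (0:ℝ) < B := by linarith
    have htail : (B⁻¹)^N * tl c B⁻¹ N ≤ (β₀⁻¹)^N := by
      have h1 : tl c B⁻¹ N ≤ ρ0 := hsparse B (by linarith) N le_rfl
      have h2 : (B⁻¹)^N ≤ (β₀⁻¹)^N := by
        apply pow_le_pow_left₀ (by positivity)
        exact inv_anti₀ (by linarith) (by linarith)
      have h3 : (0:ℝ) ≤ (B⁻¹)^N := by positivity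
      have h4 : 0 ≤ tl c B⁻¹ N := tl_nonneg (hxinv B (by linarith)).1.le hc_nn N
      nlinarith
    have hterm : ∀ n ∈ range N, (c (n+1):ℝ) * (B⁻¹)^(n+1)
        ≤ (c (n+1):ℝ) * (β₀/B) * (β₀⁻¹)^(n+1) := by
      intro n hn
      have hcnn : (0:ℝ) ≤ (c (n+1) : ℝ) := by exact_mod_cast hc_nn (n+1)
      have h1 : (B⁻¹)^(n+1) = (β₀⁻¹)^(n+1) * (β₀/B)^(n+1) := by
        rw [← mul_pow]
        congr 1
        field_simp
      have h2 : (β₀/B)^(n+1) ≤ (β₀/B) := by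
        apply pow_le_of_le_one
        · positivity
        · rw [div_le_one (by linarith)]; linarith
        · omega
      have h3 : (0:ℝ) ≤ (β₀⁻¹)^(n+1) := by positivity
      rw [h1]
      have h4 : (0:ℝ) ≤ (c (n+1):ℝ) * (β₀⁻¹)^(n+1) := mul_nonneg hcnn h3
      nlinarith [mul_le_mul_of_nonneg_left h2 h4]
    have hsum : ∑ n ∈ range N, (c (n+1):ℝ) * (B⁻¹)^(n+1)
        ≤ (β₀/B) * (∑ n ∈ range N, (c (n+1):ℝ) * (β₀⁻¹)^(n+1)) := by
      rw [Finset.mul_sum]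
      apply Finset.sum_le_sum
      intro n hn
      have := hterm n hn
      nlinarith [this]
    have hpreβ₀ : (∑ n ∈ range N, (c (n+1):ℝ) * (β₀⁻¹)^(n+1))
        = 1 - (tau β₀)^[N] 1 * (β₀⁻¹)^N - (β₀⁻¹)^N := by
      rw [hprefix_eq β₀ (by linarith), hPS]
    have hup : ∑ n ∈ range N, (c (n+1):ℝ) * (β₀⁻¹)^(n+1) ≤ 1 := by
      rw [hpreβ₀]
      nlinarith
    have hfinal : (β₀/B) + (β₀⁻¹)^N < 1 := by
      rw [div_add' _ _ _ (by linarith), div_lt_one (by linarith)]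
      have hNup2 : (β₀⁻¹)^N * B < (B - β₀) := by
        have h9 := mul_lt_mul_of_pos_right hNup hBpos
        have h9' : (B - β₀)/B*B = B - β₀ := by field_simp
        rw [h9'] at h9
        exact h9
      nlinarith
    have hr : 0 < β₀ / B := by positivity
    rw [hx]
    nlinarith [hsum, hup, htail]
  -- IVT
  obtain ⟨β, hβmem, hFβ⟩ : ∃ β ∈ Set.Icc lam B, F β = 1 := by
    have h1 : (1:ℝ) ∈ Set.Icc (F B) (F lam) := ⟨hFB.le, hFlam.le⟩
    have := intermediate_value_Icc' (by linarith : lam ≤ B) hFcont h1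
    obtain ⟨β, hβ1, hβ2⟩ := this
    exact ⟨β, hβ1, hβ2⟩
  have hβlam : lam ≤ β := hβmem.1
  have hβB : β ≤ B := hβmem.2
  have hβ1 : 1 < β := lt_of_lt_of_le hlam hβlam
  -- admissibility
  have hstar : ∀ k, 1 ≤ k → k < N →
      ∃ j, 1 ≤ j ∧ k + j ≤ N ∧ (∀ i, 1 ≤ i → i < j → c (k+i) = c i) ∧ c (k+j) < c j := by
    intro k hk hkN
    obtain ⟨jk, hjk1, hagree, hlt⟩ := exists_firstdiff hβ₀ hk
    set J := min jk (N - k) with hJ_def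
    have hJ1 : 1 ≤ J := by omega
    have hJN : k + J ≤ N := by omega
    refine ⟨J, hJ1, hJN, ?_, ?_⟩
    · intro i h1 hiJ
      have hkiN : k + i < N := by omega
      have hiN : i < N := by omega
      have e1 : c (k+i) = dig β₀ 1 (k+i) := by
        rw [hc_def, cseq_of_le (by omega), he_def]
        unfold epre
        rw [if_neg (by omega)]
      have e2 : c i = dig β₀ 1 i := by
        rw [hc_def, cseq_of_le (by omega), he_def]
        unfold epre
        rw [if_neg (by omega)]
      rw [e1, e2]
      exact hagree i h1 (by omega)
    · have e2 : c J = dig β₀ 1 J := by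
        rw [hc_def, cseq_of_le (by omega), he_def]
        unfold epre
        rw [if_neg (by omega)]
      by_cases hJcase : k + J = N
      · have e1 : c (k+J) = dig β₀ 1 N - 1 := by
          rw [hc_def, cseq_of_le (by omega), he_def]
          unfold epre
          rw [hJcase, if_pos rfl]
        rw [e1, e2]
        by_cases hJj : J = jk
        · have := hlt
          rw [← hJj] at this
          rw [hJcase] at this
          omega
        · have hJlt : J < jk := by omega
          have := hagree J hJ1 hJlt
          rw [hJcase] at this
          omega
      · have hkJN : k + J < N := by omega
        have hJj : J = jk := by omega
        have e1 : c (k+J) = dig β₀ 1 (k+J) := by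
          rw [hc_def, cseq_of_le (by omega), he_def]
          unfold epre
          rw [if_neg (by omega)]
        rw [e1, e2, hJj]
        exact hlt
  have hx0 : tl c β⁻¹ 0 = 1 := hFβ
  have hsparse' : ∀ k, N ≤ k → tl c β⁻¹ k < 1 := by
    intro k hk
    exact lt_of_le_of_lt (hsparse β hβlam k hk) hρ0lt
  have hxlt := descent hβ1 hc_ab hc_nn hx0 hstar hsparse'
  have hdigs := (digits_eq hβ1 hc_ab hc_nn hx0 hxlt).2
  exact ⟨β, hβlam, hβB, hβ1, fun n => by rw [hdigs n, hc_def]⟩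

end BZ

namespace BZ
open Finset

section Signs

variable {β β₀ : ℝ} {N g D : ℕ} {e : ℕ → ℤ}

-- parity of bp
lemma bp_parity (N g D : ℕ) (j : ℕ) : bp N g D j % 2 = j % 2 := by
  induction j with
  | zero => rw [bp_zero]; omega
  | succ j ih =>
    rw [bp_succ]
    have : adj (j+1) % 2 = (j+1) % 2 := by unfold adj; split <;> omega
    omega

/-- the scale of block j -/
noncomputable def rj (N g D : ℕ) (j : ℕ) : ℝ := (2⁻¹ : ℝ) ^ ((bP N g D j : ℝ)⁻¹)

lemma bP_pos (N g D : ℕ) (j : ℕ) : 0 < bP N g D j := by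
  have := bp_ge_base (N:=N) (g:=g) (D:=D) j
  unfold bP
  omega

lemma rj_pos (N g D : ℕ) (j : ℕ) : 0 < rj N g D j :=
  Real.rpow_pos_of_pos (by norm_num) _

lemma rj_lt_one (N g D : ℕ) (j : ℕ) : rj N g D j < 1 := by
  apply Real.rpow_lt_one (by norm_num) (by norm_num)
  have := bP_pos N g D j
  positivity

lemma rj_pow_P (N g D : ℕ) (j : ℕ) : (rj N g D j) ^ (bP N g D j) = 2⁻¹ := by
  unfold rj
  rw [← Real.rpow_natCast ((2⁻¹ : ℝ) ^ ((bP N g D j : ℝ)⁻¹)) (bP N g D j),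
    ← Real.rpow_mul (by norm_num)]
  rw [inv_mul_cancel₀ (by exact_mod_cast (bP_pos N g D j).ne')]
  exact Real.rpow_one _

lemma bP_strictMono (hg1 : 1 ≤ g) (hgN : g ≤ 2*N+2) : StrictMono (bP N g D) := by
  apply strictMono_nat_of_lt_succ
  intro j
  have h1 := bP_lt_bp_succ (N:=N) (D:=D) hgN j
  have h2 : bp N g D (j+1) ≤ bP N g D (j+1) := Nat.le_add_right _ _
  omega

lemma rj_strictMono (hg1 : 1 ≤ g) (hgN : g ≤ 2*N+2) : StrictMono (rj N g D) := by
  intro i j hij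
  unfold rj
  apply Real.rpow_lt_rpow_of_exponent_gt (by norm_num) (by norm_num)
  have h1 := bP_strictMono (N:=N) (D:=D) hg1 hgN hij
  have h2 := bP_pos N g D i
  rw [inv_lt_inv₀ (by exact_mod_cast lt_of_lt_of_le h2 h1.le) (by exact_mod_cast h2)]
  exact_mod_cast h1

theorem signs (hβ : 1 < β) (hβ₀ : 1 ≤ β₀)
    (hg1 : 1 ≤ g) (hg2 : g % 2 = 0) (hgN : g ≤ 2*N+2)
    (he_nn : ∀ n, 0 ≤ e n) (he_ab : ∀ n, |(e n : ℝ)| ≤ β₀)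
    (hDe : ∑ n ∈ range N, e (n+1) ≤ (D:ℤ))
    (hdig : ∀ n : ℕ, dig β 1 (n+1) = cseq e N g D (n+1)) :
    {t : ℝ | -β < t ∧ t < 0 ∧ phi β (t:ℂ) = 1}.Infinite := by
  classical
  set c := cseq e N g D with hc_def
  have hc_nn : ∀ n, 0 ≤ c n := cseq_nonneg he_nn
  have hc_ab : ∀ n, |(c n : ℝ)| ≤ β₀ := cseq_abs_le he_ab hβ₀
  -- Step 1 : phi link
  have hphi : ∀ z : ℝ, 0 < z → z < 1 → (phi β ((-(β*z) : ℝ) : ℂ) = 1 ↔ tl c (-z) 0 = 1) := by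
    intro z hz0 hz1
    have hzabs : |(-z)| < 1 := by rw [abs_neg, abs_of_pos hz0]; exact hz1
    have hsum : Summable (fun i : ℕ => (c (0+i+1) : ℝ) * (-z)^(i+1)) :=
      tl_summable hzabs hc_ab 0
    have hβC : (β : ℂ) ≠ 0 := by
      simp only [ne_eq, Complex.ofReal_eq_zero]
      intro h; rw [h] at hβ; linarith
    have hdiv : ((-(β*z) : ℝ) : ℂ) / (β : ℂ) = ((-z : ℝ) : ℂ) := by
      push_cast
      field_simp
    have hterm : ∀ n : ℕ, (dig β 1 (n+1) : ℂ) * (((-(β*z) : ℝ) : ℂ) / (β : ℂ))^(n+1)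
        = (((c (0+n+1) : ℝ) * (-z)^(n+1) : ℝ) : ℂ) := by
      intro n
      rw [hdiv, hdig n]
      push_cast
      rw [zero_add]
    have : phi β ((-(β*z) : ℝ) : ℂ) = ∑' n : ℕ, (((c (0+n+1) : ℝ) * (-z)^(n+1) : ℝ) : ℂ) := by
      unfold phi
      exact tsum_congr hterm
    rw [this]
    have hofreal : ∑' n : ℕ, (((c (0+n+1) : ℝ) * (-z)^(n+1) : ℝ) : ℂ)
        = ((tl c (-z) 0 : ℝ) : ℂ) := by
      unfold tl
      exact (Complex.ofRealCLM.map_tsum hsum).symm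
    rw [hofreal, Complex.ofReal_eq_one]
  -- Step 2 : sign estimates at rj
  have hkey : ∀ j : ℕ, (j % 2 = 0 → 1 < tl c (-(rj N g D j)) 0)
      ∧ (j % 2 = 1 → tl c (-(rj N g D j)) 0 < 1) := by
    intro j
    set r := rj N g D j with hr_def
    set p := bp N g D j with hp_def
    set L := bL N g D j with hL_def
    set P := bP N g D j with hP_def
    set E := bE N g D j with hE_def
    have hr0 : 0 < r := rj_pos N g D j
    have hr1 : r < 1 := rj_lt_one N g D j
    have hrP : r ^ P = 2⁻¹ := rj_pow_P N g D j
    have hrabs : |(-r)| < 1 := by rw [abs_neg, abs_of_pos hr0]; exact hr1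
    have hpbase := bp_ge_base (N:=N) (g:=g) (D:=D) j
    have hp1 : 1 ≤ p := by omega
    have hL42 : 42 ≤ L := bL_ge N g D j
    have hpE : p - 1 ≤ E := by unfold E; unfold bE; omega
    have hEP : E < P := bE_lt_bP hg1 j
    have hPp1 : P + g ≤ bp N g D (j+1) := bP_lt_bp_succ hgN j
    -- split the series at E
    have hsplit := tl_split hrabs hc_ab 0 E
    simp only [zero_add] at hsplit
    -- finite sum: split at p-1
    have hfin : ∑ n ∈ range E, (c (n+1) : ℝ) * (-r)^(n+1)
        = (∑ n ∈ range (p-1), (c (n+1) : ℝ) * (-r)^(n+1))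
          + ∑ n ∈ Ico (p-1) E, (c (n+1) : ℝ) * (-r)^(n+1) := by
      simp only [Finset.range_eq_Ico]
      exact (Finset.sum_Ico_consecutive _ (Nat.zero_le (p-1)) hpE).symm
    -- block part
    have hblock : ∑ n ∈ Ico (p-1) E, (c (n+1) : ℝ) * (-r)^(n+1)
        = ∑ m ∈ range L, (-r)^(p + m*g) := by
      have h1 : ∑ n ∈ Ico (p-1) E, (c (n+1) : ℝ) * (-r)^(n+1)
          = ∑ n ∈ Ico ((p-1)+1) (E+1), (c n : ℝ) * (-r)^n := by
        exact sum_shift (fun n => (c n : ℝ) * (-r)^n) (p-1) E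
      rw [h1, show (p-1)+1 = p from by omega]
      exact block_sum hg1 hgN (fun n => (-r)^n) j
    -- block sign and size
    have hparity : ∀ m, m < L → (-r)^(p + m*g) = (-1:ℝ)^j * r^(p + m*g) := by
      intro m hm
      have hpar : (p + m*g) % 2 = j % 2 := by
        have h1 := bp_parity N g D j
        have h2 : m * g % 2 = 0 := by rw [Nat.mul_mod, hg2]; simp
        omega
      rw [neg_pow]
      congr 1
      rcases Nat.even_or_odd j with hj | hj
      · have hev : Even (p + m*g) := by
          rw [Nat.even_iff]
          rw [Nat.even_iff] at hj
          omega
        rw [hev.neg_one_pow, hj.neg_one_pow]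
      · have hod : Odd (p + m*g) := by
          rw [Nat.odd_iff]
          rw [Nat.odd_iff] at hj
          omega
        rw [hod.neg_one_pow, hj.neg_one_pow]
    have hBsum : ∑ m ∈ range L, (-r)^(p + m*g) = (-1:ℝ)^j * ∑ m ∈ range L, r^(p + m*g) := by
      rw [Finset.mul_sum]
      apply Finset.sum_congr rfl
      intro m hm
      rw [Finset.mem_range] at hm
      exact hparity m hm
    have hterm_ge : ∀ m ∈ range L, (2⁻¹ : ℝ) ≤ r^(p + m*g) := by
      intro m hm
      rw [Finset.mem_range] at hm
      rw [← hrP]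
      apply pow_le_pow_of_le_one hr0.le hr1.le
      have hPe : P = p + g * L := rfl
      have t1 : m * g ≤ (L - 1) * g := Nat.mul_le_mul_right _ (by omega)
      have t2 : (L - 1) * g ≤ L * g := Nat.mul_le_mul_right _ (by omega)
      have t3 : L * g = g * L := Nat.mul_comm _ _
      omega
    have hBlow : (L : ℝ) * 2⁻¹ ≤ ∑ m ∈ range L, r^(p + m*g) := by
      have := Finset.card_nsmul_le_sum (range L) (fun m => r^(p + m*g)) 2⁻¹
        (fun m hm => hterm_ge m hm)
      simpa using this
    -- prefix bound
    have hpre : |∑ n ∈ range (p-1), (c (n+1) : ℝ) * (-r)^(n+1)| ≤ (D : ℝ) + bcum N g D j := by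
      have h1 : |∑ n ∈ range (p-1), (c (n+1) : ℝ) * (-r)^(n+1)|
          ≤ ∑ n ∈ range (p-1), |(c (n+1) : ℝ) * (-r)^(n+1)| := Finset.abs_sum_le_sum_abs _ _
      have h2 : ∀ n ∈ range (p-1), |(c (n+1) : ℝ) * (-r)^(n+1)| ≤ (c (n+1) : ℝ) := by
        intro n _
        rw [abs_mul, abs_pow, abs_neg, abs_of_pos hr0]
        have hcn : (0:ℝ) ≤ (c (n+1) : ℝ) := by exact_mod_cast hc_nn (n+1)
        have hrn : r^(n+1) ≤ 1 := pow_le_one₀ hr0.le hr1.le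
        have hrnn : (0:ℝ) ≤ r^(n+1) := by positivity
        rw [abs_of_nonneg hcn]
        nlinarith
      have h3 : ∑ n ∈ range (p-1), |(c (n+1) : ℝ) * (-r)^(n+1)|
          ≤ ∑ n ∈ range (p-1), (c (n+1) : ℝ) := Finset.sum_le_sum h2
      have h4 : ∑ n ∈ range (p-1), (c (n+1) : ℝ) ≤ (D : ℝ) + bcum N g D j := by
        have hcount := count_le hg1 hgN he_nn hDe j
        have h5 : ∑ n ∈ range (p-1), c (n+1) = ∑ n ∈ Ico 1 p, c n := by
          have := sum_shift (M := ℤ) c 0 (p-1)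
          rw [Finset.range_eq_Ico]
          rw [this, show (p-1)+1 = p from by omega]
        have h6 : ((∑ n ∈ range (p-1), c (n+1) : ℤ) : ℝ) ≤ ((D:ℤ) : ℝ) + ((bcum N g D j : ℤ) : ℝ) := by
          rw [h5]
          exact_mod_cast hcount
        push_cast at h6 ⊢
        exact h6
      linarith
    -- tail bound
    have htail : |(-r)^E * tl c (-r) E| ≤ 8⁻¹ := by
      have habs1 : |(-r)^E * tl c (-r) E| = r^E * |tl c (-r) E| := by
        rw [abs_mul, abs_pow, abs_neg, abs_of_pos hr0]
      have habs2 : |tl c (-r) E| ≤ tl c r E := by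
        have h1 := tl_abs_le_tl hrabs hc_ab E
        have h2 : (fun n => |c n|) = c := funext (fun n => abs_of_nonneg (hc_nn n))
        rw [h2] at h1
        rw [abs_neg, abs_of_pos hr0] at h1
        exact h1
      set t := bp N g D (j+1) - 1 - E with ht_def
      have hzr : tl c r E = r^t * tl c r (E + t) := by
        apply tl_zrun (by rw [abs_of_pos hr0]; exact hr1) hc_ab
        intro i h1 h2
        apply cseq_zero_between (j := j) hg1 hgN
        · unfold E at *; omega
        · unfold E at *; omega
      have hEt : E + t = bp N g D (j+1) - 1 := by omega
      have hsp : tl c r (E + t) ≤ r / (1 - r^g) := by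
        apply tl_sparse hr0 hr1 hg1 hc_ab hc_nn (fun n hn => cseq_01 n hn)
          (cseq_gap hg1 hgN) cseq_one_unbounded
        have := bp_ge_base (N:=N) (g:=g) (D:=D) (j+1)
        omega
      -- denominator bound : 1 - r^g ≥ g/(4P)
      have hrg_le : r^g ≤ 1 := pow_le_one₀ hr0.le hr1.le
      have hgP : g ≤ P := by
        unfold P; unfold bP
        have : g ≤ 2*N+2 := hgN
        omega
      have honesub : 1 - r ≥ (2*(P:ℝ))⁻¹ := by
        have hbern : 1 + (P:ℝ) * (r - 1) ≤ r^P := by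
          have := one_add_mul_le_pow (show (-2:ℝ) ≤ r - 1 by linarith) P
          calc 1 + (P:ℝ) * (r-1) ≤ (1 + (r-1))^P := this
            _ = r^P := by norm_num
        rw [hrP] at hbern
        have hPpos : (0:ℝ) < (P:ℝ) := by exact_mod_cast bP_pos N g D j
        rw [ge_iff_le, inv_le_iff_one_le_mul₀ (by positivity)]
        nlinarith
      have hgeom : 1 - r^g = (1 - r) * ∑ i ∈ range g, r^i := by
        have := geom_sum_mul r g
        nlinarith [this]
      have hsumg : (g:ℝ) * 2⁻¹ ≤ ∑ i ∈ range g, r^i := by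
        have hterm : ∀ i ∈ range g, (2⁻¹:ℝ) ≤ r^i := by
          intro i hi
          rw [Finset.mem_range] at hi
          rw [← hrP]
          apply pow_le_pow_of_le_one hr0.le hr1.le
          omega
        have := Finset.card_nsmul_le_sum (range g) (fun i => r^i) 2⁻¹ hterm
        simpa using this
      have hPpos : (0:ℝ) < (P:ℝ) := by exact_mod_cast bP_pos N g D j
      have hgpos : (0:ℝ) < (g:ℝ) := by exact_mod_cast hg1
      have hden : (g:ℝ) / (4*P) ≤ 1 - r^g := by
        rw [hgeom]
        have h1 : (0:ℝ) ≤ 1 - r := by linarith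
        have heq : (2*(P:ℝ))⁻¹ * ((g:ℝ) * 2⁻¹) = (g:ℝ)/(4*P) := by
          rw [mul_inv, div_eq_mul_inv, mul_inv]
          ring
        rw [← heq]
        apply mul_le_mul honesub hsumg (by positivity) h1
      have hdenpos : (0:ℝ) < (g:ℝ)/(4*P) := by positivity
      -- numerator bound : r^(bp (j+1)) ≤ 1/(32 P)
      have hnum : r^(bp N g D (j+1)) ≤ (32*(P:ℝ))⁻¹ := by
        have h1 : r^(bp N g D (j+1)) ≤ r^(32*P*P) := by
          apply pow_le_pow_of_le_one hr0.le hr1.le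
          rw [bp_succ]
          have : 32*(bP N g D j)^2 = 32*P*P := by unfold P; ring
          omega
        have h2 : r^(32*P*P) = (2⁻¹:ℝ)^(32*P) := by
          rw [show 32*P*P = P*(32*P) from by ring, pow_mul, hrP]
        have h3 : (2⁻¹:ℝ)^(32*P) ≤ (32*(P:ℝ))⁻¹ := by
          have hlt : (32*P) < 2^(32*P) := Nat.lt_two_pow_self
          have hlt' : (32*(P:ℝ)) < 2^(32*P) := by exact_mod_cast hlt
          rw [inv_pow, inv_le_inv₀ (by positivity) (by positivity)]
          push_cast at hlt' ⊢
          linarith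
        calc r^(bp N g D (j+1)) ≤ r^(32*P*P) := h1
          _ = (2⁻¹:ℝ)^(32*P) := h2
          _ ≤ (32*(P:ℝ))⁻¹ := h3
      -- combine
      have hrEt : r^E * (r^t * (r / (1 - r^g))) = r^(bp N g D (j+1)) / (1 - r^g) := by
        rw [show bp N g D (j+1) = E + t + 1 from by omega]
        rw [pow_add, pow_add, pow_one]
        ring
      have hfrac : r^(bp N g D (j+1)) / (1 - r^g) ≤ (32*(P:ℝ))⁻¹ / ((g:ℝ)/(4*P)) := by
        apply div_le_div₀ (by positivity) hnum hdenpos hden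
      have hfrac2 : (32*(P:ℝ))⁻¹ / ((g:ℝ)/(4*P)) ≤ 8⁻¹ := by
        have hinv : ((g:ℝ)/(4*P))⁻¹ = (4*(P:ℝ))/(g:ℝ) := inv_div _ _
        have hgne : (g:ℝ) ≠ 0 := ne_of_gt hgpos
        have hPne : (P:ℝ) ≠ 0 := ne_of_gt hPpos
        have heq2 : (32*(P:ℝ))⁻¹ * ((4*(P:ℝ))/(g:ℝ)) = 8⁻¹ * (g:ℝ)⁻¹ := by
          rw [mul_inv, div_eq_mul_inv]
          have : (P:ℝ)⁻¹ * (P:ℝ) = 1 := inv_mul_cancel₀ hPne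
          calc 32⁻¹ * (P:ℝ)⁻¹ * (4 * (P:ℝ) * (g:ℝ)⁻¹)
              = (32⁻¹ * 4) * ((P:ℝ)⁻¹ * (P:ℝ)) * (g:ℝ)⁻¹ := by ring
            _ = 8⁻¹ * (g:ℝ)⁻¹ := by rw [this]; norm_num
        rw [div_eq_mul_inv, hinv, heq2]
        have hg1' : (1:ℝ) ≤ (g:ℝ) := by exact_mod_cast hg1
        have : (g:ℝ)⁻¹ ≤ 1 := by
          rw [inv_le_one_iff₀]; right; exact hg1'
        nlinarith
      have htlEnn : 0 ≤ tl c r (E+t) := tl_nonneg hr0.le hc_nn _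
      have hrt : (0:ℝ) ≤ r^t := by positivity
      have hrE : (0:ℝ) ≤ r^E := by positivity
      calc |(-r)^E * tl c (-r) E| = r^E * |tl c (-r) E| := habs1
        _ ≤ r^E * tl c r E := by nlinarith [abs_nonneg (tl c (-r) E)]
        _ = r^E * (r^t * tl c r (E+t)) := by rw [hzr]
        _ ≤ r^E * (r^t * (r / (1 - r^g))) := by
            have hrEt' : (0:ℝ) ≤ r^E * r^t := by positivity
            nlinarith
        _ = r^(bp N g D (j+1)) / (1 - r^g) := hrEt
        _ ≤ (32*(P:ℝ))⁻¹ / ((g:ℝ)/(4*P)) := hfrac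
        _ ≤ 8⁻¹ := hfrac2
    -- assemble
    have hLA : (L:ℝ) = 2*((D:ℝ) + bcum N g D j) + 42 := by
      unfold L; unfold bL; push_cast; ring
    set A := (D:ℝ) + bcum N g D j with hA_def
    have hAnn : 0 ≤ A := by positivity
    have hS : tl c (-r) 0 = (∑ n ∈ range (p-1), (c (n+1) : ℝ) * (-r)^(n+1))
        + (-1:ℝ)^j * (∑ m ∈ range L, r^(p + m*g)) + (-r)^E * tl c (-r) E := by
      rw [hsplit, hfin, hblock, hBsum]
    have hBsum_nn : 0 ≤ ∑ m ∈ range L, r^(p + m*g) := by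
      apply Finset.sum_nonneg
      intro m _
      positivity
    constructor
    · intro hjeven
      have hsign : (-1:ℝ)^j = 1 := by
        have : Even j := Nat.even_iff.mpr hjeven
        exact this.neg_one_pow
      rw [hS, hsign, one_mul]
      have h1 : (L:ℝ) * 2⁻¹ ≥ A + 21 := by rw [hLA]; linarith
      have h2 := neg_abs_le (∑ n ∈ range (p-1), (c (n+1) : ℝ) * (-r)^(n+1))
      have h3 := neg_abs_le ((-r)^E * tl c (-r) E)
      linarith [hBlow, hpre, htail]
    · intro hjodd
      have hsign : (-1:ℝ)^j = -1 := by
        have : Odd j := Nat.odd_iff.mpr hjodd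
        exact this.neg_one_pow
      rw [hS, hsign]
      have h1 : (L:ℝ) * 2⁻¹ ≥ A + 21 := by rw [hLA]; linarith
      have h2 := le_abs_self (∑ n ∈ range (p-1), (c (n+1) : ℝ) * (-r)^(n+1))
      have h3 := le_abs_self ((-r)^E * tl c (-r) E)
      linarith [hBlow, hpre, htail]
  -- Step 3 : continuity of Sr on relevant intervals, IVT
  have hScont : ∀ j : ℕ, ContinuousOn (fun x : ℝ => tl c (-x) 0)
      (Set.Icc (rj N g D j) (rj N g D (j+1))) := by
    intro j
    have hSeq : (fun x : ℝ => tl c (-x) 0)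
        = fun x : ℝ => ∑' n : ℕ, (c (n+1) : ℝ) * (-x)^(n+1) := by
      funext x
      unfold tl
      congr 1
      funext i
      rw [zero_add]
    rw [hSeq]
    set R := rj N g D (j+1) with hR_def
    have hR1 : R < 1 := rj_lt_one N g D (j+1)
    have hR0 : 0 < R := rj_pos N g D (j+1)
    apply contOn_tsum _ (fun n => β₀ * R^(n+1))
    · apply Summable.mul_left
      have : Summable (fun n : ℕ => R * R^n) :=
        (summable_geometric_of_lt_one hR0.le hR1).mul_left R
      apply this.congr
      intro n
      rw [pow_succ]
      ring
    · intro n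
      apply ContinuousOn.mul continuousOn_const
      exact (continuousOn_id.neg).pow _
    · intro n x hx
      rw [Real.norm_eq_abs, abs_mul, abs_pow, abs_neg]
      have h1 : |(c (n+1) : ℝ)| ≤ β₀ := hc_ab _
      have hx0 : 0 < rj N g D j := rj_pos N g D j
      have hxabs : |x| ≤ R := by
        rw [abs_of_pos (lt_of_lt_of_le hx0 hx.1)]
        exact hx.2
      have h2 : |x|^(n+1) ≤ R^(n+1) := pow_le_pow_left₀ (abs_nonneg _) hxabs _
      have h3 : (0:ℝ) ≤ |x|^(n+1) := by positivity
      nlinarith [abs_nonneg ((c (n+1):ℝ))]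
  have hzeros : ∀ i : ℕ, ∃ z : ℝ, z ∈ Set.Icc (rj N g D (2*i)) (rj N g D (2*i+1))
      ∧ tl c (-z) 0 = 1 := by
    intro i
    have hle : rj N g D (2*i) ≤ rj N g D (2*i+1) :=
      (rj_strictMono hg1 hgN (by omega)).le
    have hgt := (hkey (2*i)).1 (by omega)
    have hlt := (hkey (2*i+1)).2 (by omega)
    have h1 : (1:ℝ) ∈ Set.Icc (tl c (-(rj N g D (2*i+1))) 0) (tl c (-(rj N g D (2*i))) 0) :=
      ⟨hlt.le, hgt.le⟩
    have := intermediate_value_Icc' hle (hScont (2*i)) h1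
    obtain ⟨z, hz1, hz2⟩ := this
    exact ⟨z, hz1, hz2⟩
  choose zf hzf1 hzf2 using hzeros
  -- Step 4 : conclude
  have hβ0 : (0:ℝ) < β := by linarith
  apply Set.infinite_of_injective_forall_mem
    (f := fun i : ℕ => -(β * zf i))
  case hi =>
    intro i i' hii
    simp only at hii
    have h1 : β * zf i = β * zf i' := by linarith [neg_injective hii]
    have h2 : zf i = zf i' := by
      have := mul_left_cancel₀ (ne_of_gt hβ0) h1
      exact this
    by_contra hne
    rcases lt_or_gt_of_ne hne with h | h
    · have : zf i < zf i' := by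
        calc zf i ≤ rj N g D (2*i+1) := (hzf1 i).2
          _ < rj N g D (2*i') := rj_strictMono hg1 hgN (by omega)
          _ ≤ zf i' := (hzf1 i').1
      linarith [this, h2.le]
    · have : zf i' < zf i := by
        calc zf i' ≤ rj N g D (2*i'+1) := (hzf1 i').2
          _ < rj N g D (2*i) := rj_strictMono hg1 hgN (by omega)
          _ ≤ zf i := (hzf1 i).1
      linarith [this, h2.le]
  case hf =>
    intro i
    have hz0 : 0 < zf i := lt_of_lt_of_le (rj_pos N g D (2*i)) (hzf1 i).1
    have hz1 : zf i < 1 := lt_of_le_of_lt (hzf1 i).2 (rj_lt_one N g D (2*i+1))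
    refine ⟨?_, ?_, ?_⟩
    · simp only [neg_lt_neg_iff]
      nlinarith
    · simp only [Left.neg_neg_iff]
      positivity
    · have := (hphi (zf i) hz0 hz1).mpr (hzf2 i)
      exact this
  done

end Signs
end BZ

namespace BZ
open Finset

lemma tau_iter_zero {β : ℝ} (hβ : 1 < β) {n₀ : ℕ} (h : ∀ n, n₀ < n → dig β 1 n = 0) :
    (tau β)^[n₀] 1 = 0 := by
  by_contra h0
  have hnn := iter_nonneg β n₀
  have hpos : 0 < (tau β)^[n₀] 1 := lt_of_le_of_ne hnn (Ne.symm h0)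
  have hgrow : ∀ j, (tau β)^[n₀+j] 1 = β^j * (tau β)^[n₀] 1 := by
    intro j
    induction j with
    | zero => simp
    | succ j ih =>
      have hrec := dig_rec β (n₀+j)
      rw [show n₀ + (j+1) = (n₀ + j) + 1 from by omega, hrec, ih,
        h (n₀+j+1) (by omega)]
      push_cast
      ring
  obtain ⟨T, hT⟩ := pow_unbounded_of_one_lt (((tau β)^[n₀] 1)⁻¹) hβ
  have h1 : 1 < β^T * (tau β)^[n₀] 1 := by
    have h2 := mul_lt_mul_of_pos_right hT hpos
    rw [inv_mul_cancel₀ (ne_of_gt hpos)] at h2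
    linarith
  have h2 := hgrow T
  have h3 := iter_le_one β (n₀+T)
  rw [h2] at h3
  linarith

/-- the set of betas with eventually-zero digit expansion is countable -/
lemma countable_finexp : Set.Countable {β : ℝ | 1 < β ∧ ∃ n₀, 1 ≤ n₀ ∧ ∀ n, n₀ < n → dig β 1 n = 0} := by
  classical
  have hsub : {β : ℝ | 1 < β ∧ ∃ n₀, 1 ≤ n₀ ∧ ∀ n, n₀ < n → dig β 1 n = 0}
      ⊆ ⋃ l : List ℤ, {β : ℝ | 1 < β ∧ 1 ≤ l.getD 0 0 ∧ (∀ n, 0 ≤ l.getD n 0) ∧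
        (∑ n ∈ range l.length, (l.getD n 0 : ℝ) * (β⁻¹)^(n+1)) = 1} := by
    rintro β ⟨hβ, n₀, hn₀, hzero⟩
    rw [Set.mem_iUnion]
    refine ⟨(List.range n₀).map (fun n => dig β 1 (n+1)), hβ, ?_, ?_, ?_⟩
    · have h0 : ((List.range n₀).map (fun n => dig β 1 (n+1))).getD 0 0 = dig β 1 1 := by
        rw [List.getD_eq_getElem?_getD, List.getElem?_map]
        have : (List.range n₀)[0]? = some 0 := by
          rw [List.getElem?_range (by omega)]
        rw [this]
        simp
      rw [h0]
      have : dig β 1 1 = ⌊β⌋ := by simp [dig]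
      rw [this]
      have : (1:ℤ) ≤ ⌊β⌋ := by
        rw [Int.le_floor]; push_cast; linarith
      exact this
    · intro n
      rw [List.getD_eq_getElem?_getD, List.getElem?_map]
      by_cases hn : n < n₀
      · rw [List.getElem?_range hn]
        simp only [Option.map_some, Option.getD_some]
        cases n with
        | zero => simp [dig]; exact Int.floor_nonneg.mpr (by linarith)
        | succ k =>
          have := dig_nonneg (show (0:ℝ) < β by linarith) (k+1)
          simpa using this
      · have hnone : (List.range n₀)[n]? = none := by
          apply List.getElem?_eq_none
          simp
          omega
        rw [hnone]
        simp
    · have hlen : ((List.range n₀).map (fun n => dig β 1 (n+1))).length = n₀ := by simp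
      rw [hlen]
      have hget : ∀ n ∈ range n₀, (((List.range n₀).map (fun m => dig β 1 (m+1))).getD n 0 : ℝ) * (β⁻¹)^(n+1)
          = (dig β 1 (n+1) : ℝ) * (β⁻¹)^(n+1) := by
        intro n hn
        rw [Finset.mem_range] at hn
        rw [List.getD_eq_getElem?_getD, List.getElem?_map, List.getElem?_range hn]
        simp
      rw [Finset.sum_congr rfl hget, partial_sum (show (0:ℝ) < β by linarith) n₀,
        tau_iter_zero hβ hzero]
      simp
  apply Set.Countable.mono hsub
  apply Set.countable_iUnion
  intro l
  apply Set.Subsingleton.countable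
  have hgen : ∀ x y : ℝ, 1 < x → 1 ≤ l.getD 0 0 → (∀ n, 0 ≤ l.getD n 0) →
      (∑ n ∈ range l.length, (l.getD n 0 : ℝ) * (x⁻¹)^(n+1)) = 1 →
      (∑ n ∈ range l.length, (l.getD n 0 : ℝ) * (y⁻¹)^(n+1)) = 1 → x < y → False := by
    intro x y hx hl0 hlnn hsum hsum' hlt
    have hlenpos : 0 < l.length := by
      rcases l with _ | ⟨hd, tl⟩
      · simp [List.getD] at hl0
      · simp
    have hstrict : ∑ n ∈ range l.length, (l.getD n 0 : ℝ) * (y⁻¹)^(n+1)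
        < ∑ n ∈ range l.length, (l.getD n 0 : ℝ) * (x⁻¹)^(n+1) := by
      apply Finset.sum_lt_sum
      · intro n hn
        have h1 : (0:ℝ) ≤ (l.getD n 0 : ℝ) := by exact_mod_cast hlnn n
        have h2 : (y⁻¹)^(n+1) ≤ (x⁻¹)^(n+1) := by
          apply pow_le_pow_left₀ (inv_nonneg.mpr (by linarith))
          exact inv_anti₀ (by linarith) hlt.le
        nlinarith
      · refine ⟨0, Finset.mem_range.mpr hlenpos, ?_⟩
        have h1 : (1:ℝ) ≤ (l.getD 0 0 : ℝ) := by exact_mod_cast hl0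
        have h2 : (y⁻¹)^(0+1) < (x⁻¹)^(0+1) := by
          simpa using inv_strictAnti₀ (by linarith) hlt
        nlinarith
    rw [hsum, hsum'] at hstrict
    linarith
  rintro β ⟨hβ, hl0, hlnn, hsum⟩ β' ⟨hβ', hl0', hlnn', hsum'⟩
  by_contra hne
  rcases lt_or_gt_of_ne hne with h | h
  · exact hgen β β' hβ hl0 hlnn hsum hsum' h
  · exact hgen β' β hβ' hl0 hlnn hsum' hsum h

lemma anchor {β₀ : ℝ} (hβ₀ : 1 < β₀) {ε : ℝ} (hε : 0 < ε) :
    ∃ β₁ : ℝ, 1 < β₁ ∧ |β₀ - β₁| < ε/2 ∧ (∀ m, ∃ n, m < n ∧ 1 ≤ dig β₁ 1 n) := by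
  classical
  have key : ∀ β : ℝ, 1 < β → ¬(∃ n₀, 1 ≤ n₀ ∧ ∀ n, n₀ < n → dig β 1 n = 0) →
      (∀ m, ∃ n, m < n ∧ 1 ≤ dig β 1 n) := by
    intro β hβ hnot m
    push_neg at hnot
    obtain ⟨n, hn, hne⟩ := hnot (m+1) (by omega)
    have hpos : 0 ≤ dig β 1 n := by
      obtain ⟨k, rfl⟩ : ∃ k, n = k + 1 := ⟨n - 1, by omega⟩
      exact dig_nonneg (by linarith) k
    exact ⟨n, by omega, by omega⟩
  by_cases hβ₀fin : ∃ n₀, 1 ≤ n₀ ∧ ∀ n, n₀ < n → dig β₀ 1 n = 0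
  · -- β₀ has finite expansion : pick a nearby point outside the countable set
    set a := max 1 (β₀ - ε/4) with ha_def
    have ha : a < β₀ := by
      rw [ha_def]
      apply max_lt hβ₀
      linarith
    have hIoo : ¬ (Set.Ioo a β₀ ⊆ {β : ℝ | 1 < β ∧ ∃ n₀, 1 ≤ n₀ ∧ ∀ n, n₀ < n → dig β 1 n = 0}) := by
      intro hsub
      have h1 : (MeasureTheory.volume (Set.Ioo a β₀)) = 0 :=
        le_antisymm (le_trans (MeasureTheory.measure_mono hsub)
          (le_of_eq (Set.Countable.measure_zero countable_finexp _))) zero_le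
      rw [Real.volume_Ioo] at h1
      have h2 : ENNReal.ofReal (β₀ - a) ≠ 0 := by
        simp only [ne_eq, ENNReal.ofReal_eq_zero, not_le]
        linarith
      exact h2 h1
    rw [Set.not_subset] at hIoo
    obtain ⟨β₁, hβ₁mem, hβ₁not⟩ := hIoo
    have h1 : 1 < β₁ := by
      have := hβ₁mem.1
      rw [ha_def] at this
      have h2 : (1:ℝ) ≤ a := le_max_left _ _
      rw [ha_def] at h2
      linarith [this, h2]
    refine ⟨β₁, h1, ?_, ?_⟩
    · have := hβ₁mem.1
      have := hβ₁mem.2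
      rw [ha_def] at *
      rw [abs_of_pos (by linarith)]
      have : β₀ - ε/4 ≤ max 1 (β₀ - ε/4) := le_max_right _ _
      linarith
    · apply key β₁ h1
      intro hcon
      exact hβ₁not ⟨h1, hcon⟩
  · exact ⟨β₀, hβ₀, by rw [sub_self, abs_zero]; linarith, key β₀ hβ₀ hβ₀fin⟩

end BZ

namespace BZ
open Finset

theorem main {β₀ : ℝ} (hβ₀ : 1 < β₀) : β₀ ∈ closure {β : ℝ | 1 < β ∧
    {t : ℝ | -β < t ∧ t < 0 ∧ phi β (t:ℂ) = 1}.Infinite} := by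
  rw [Metric.mem_closure_iff]
  intro ε hε
  obtain ⟨β₁, hβ₁, hβ₁close, hinfdig⟩ := anchor hβ₀ hε
  set ε'' := min (ε/2) ((β₁ - 1)/2) with hε''_def
  have hε''a : ε'' ≤ ε/2 := min_le_left _ _
  have hε''b : ε'' ≤ (β₁ - 1)/2 := min_le_right _ _
  have hε''pos : 0 < ε'' := lt_min (by linarith) (by linarith)
  set lam := β₁ - ε''/2 with hlam_def
  set B := β₁ + ε''/2 with hB_def
  have hlam1 : 1 < lam := by rw [hlam_def]; linarith
  have hlamβ : lam < β₁ := by rw [hlam_def]; linarith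
  have hBβ : β₁ < B := by rw [hB_def]; linarith
  have hB2 : B ≤ 2*β₁ := by rw [hB_def]; linarith
  have hlaminv1 : lam⁻¹ < 1 := by
    rw [inv_lt_one_iff₀]; right; exact hlam1
  have hlaminv0 : 0 < lam⁻¹ := by
    have : (0:ℝ) < lam := by linarith
    positivity
  obtain ⟨g₀, hg₀⟩ := exists_pow_lt_of_lt_one (show (0:ℝ) < 1 - lam⁻¹ by linarith) hlaminv1
  set g := 2*g₀ + 2 with hg_def
  have hg1 : 1 ≤ g := by omega
  have hg2 : g % 2 = 0 := by omega
  have hρ : lam⁻¹ + (lam⁻¹)^g < 1 := by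
    have h1 : (lam⁻¹)^g ≤ (lam⁻¹)^g₀ :=
      pow_le_pow_of_le_one hlaminv0.le hlaminv1.le (by omega)
    linarith [hg₀]
  have hβ₁inv1 : β₁⁻¹ < 1 := by rw [inv_lt_one_iff₀]; right; exact hβ₁
  have hβ₁inv0 : 0 < β₁⁻¹ := by
    have : (0:ℝ) < β₁ := by linarith
    positivity
  obtain ⟨N₁, hN₁⟩ := exists_pow_lt_of_lt_one
    (show (0:ℝ) < (β₁ - lam)/(4*β₁) by
      have h1 : (0:ℝ) < β₁ - lam := by linarith
      have h2 : (0:ℝ) < 4*β₁ := by linarith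
      positivity) hβ₁inv1
  obtain ⟨N₂, hN₂⟩ := exists_pow_lt_of_lt_one
    (show (0:ℝ) < (B - β₁)/B by
      have h1 : (0:ℝ) < B - β₁ := by linarith
      have h2 : (0:ℝ) < B := by linarith
      positivity) hβ₁inv1
  obtain ⟨N, hNgt, hdN⟩ := hinfdig (N₁ + N₂ + g + 1)
  have hgN : g ≤ 2*N + 2 := by omega
  have hN1 : 1 ≤ N := by omega
  have hNlow : (β₁⁻¹)^N < (β₁ - lam)/(4*β₁) :=
    lt_of_le_of_lt (pow_le_pow_of_le_one hβ₁inv0.le hβ₁inv1.le (by omega)) hN₁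
  have hNup : (β₁⁻¹)^N < (B - β₁)/B :=
    lt_of_le_of_lt (pow_le_pow_of_le_one hβ₁inv0.le hβ₁inv1.le (by omega)) hN₂
  obtain ⟨β, hβlam, hβB, hβ1, hdig⟩ :=
    exists_good_beta hβ₁ hlam1 hlamβ hBβ hB2 hg1 hgN hN1 hρ hdN hNlow hNup
  refine ⟨β, ⟨hβ1, ?_⟩, ?_⟩
  · exact signs hβ1 hβ₁.le hg1 hg2 hgN (epre_nonneg hβ₁ hdN) (epre_abs_le hβ₁ hdN)
      (by unfold Dpre; exact Int.self_le_toNat _) hdig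
  · rw [Real.dist_eq]
    have h1 : |β₀ - β| ≤ |β₀ - β₁| + |β₁ - β| := abs_sub_le _ _ _
    have hβlam' : β₁ - ε''/2 ≤ β := by rw [hlam_def] at hβlam; exact hβlam
    have hβB' : β ≤ β₁ + ε''/2 := by rw [hB_def] at hβB; exact hβB
    have h2 : |β₁ - β| ≤ ε''/2 := abs_le.mpr ⟨by linarith, by linarith⟩
    linarith [hβ₁close]

end BZ

theorem stmt7 :
    Set.Ioi (1 : ℝ) ⊆ closure {β : ℝ | 1 < β ∧
      {t : ℝ | -β < t ∧ t < 0 ∧ phi β (t : ℂ) = 1}.Infinite} := by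
  intro β₀ hβ₀
  exact BZ.main hβ₀
end

section
/- Let β₀ > 1 and for each β > 1 consider the analytic function Ψ_β(z) := ψ_β(βz) = 1 + Σ_{n=1}^∞ τ_β^n(1)·z^n on the open unit disk. Then: (i) as β → β₀ with β > β₀, Ψ_β converges to Ψ_{β₀} uniformly on every compact subset of the open unit disk; (ii) if β₀ is not simple, then Ψ_β → Ψ_{β₀} uniformly on every compact subset of the open unit disk as β → β₀ (two-sidedly); (iii) if β₀ is simple with L = L(1) (the length of the greedy expansion of 1 in base β₀), then as β → β₀ with β < β₀, Ψ_β converges uniformly on every compact subset of the open unit disk to the analytic function z ↦ Ψ_{β₀}(z)/(1 − z^L). -/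
open scoped BigOperators

/-- `Ψ_β(z) = ψ_β(βz) = 1 + Σ_{n≥1} τ_β^n(1) zⁿ` on the open unit disk. -/
noncomputable def PsiU (β : ℝ) (z : ℂ) : ℂ :=
  1 + ∑' n : ℕ, (((tau β)^[n + 1] 1 : ℝ) : ℂ) * z ^ (n + 1)


open Filter Set Topology


lemma summable_aux {r : ℝ} (h0 : 0 ≤ r) (h1 : r < 1) (c : ℕ → ℝ) (hc : ∀ n, |c n| ≤ 2)
    {z : ℂ} (hz : ‖z‖ ≤ r) : Summable (fun n : ℕ => (c n : ℂ) * z ^ (n+1)) := by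
  apply Summable.of_norm_bounded (g := fun n => 2 * r ^ (n+1))
  · exact ((summable_geometric_of_lt_one h0 h1).comp_injective
      (add_left_injective 1)).mul_left 2
  · intro n
    rw [norm_mul, Complex.norm_real, norm_pow, Real.norm_eq_abs]
    have h2 : ‖z‖ ^ (n+1) ≤ r ^ (n+1) := pow_le_pow_left₀ (norm_nonneg _) hz _
    have := hc n
    have h3 : (0:ℝ) ≤ ‖z‖ ^ (n+1) := pow_nonneg (norm_nonneg _) _
    nlinarith [abs_nonneg (c n)]

/-- Workhorse: coefficientwise convergence of [0,1]-bounded coefficients gives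
local-uniform convergence of the power series on compacts of the unit ball. -/
lemma unif_of_coeff (l : Filter ℝ) (c : ℕ → ℝ → ℝ) (d : ℕ → ℝ)
    (hc0 : ∀ n β, 0 ≤ c n β) (hc1 : ∀ n β, c n β ≤ 1)
    (hd0 : ∀ n, 0 ≤ d n) (hd1 : ∀ n, d n ≤ 1)
    (hlim : ∀ n, Tendsto (fun β => c n β) l (𝓝 (d n)))
    (K : Set ℂ) (hK : K ⊆ Metric.ball 0 1) (hKc : IsCompact K) :
    TendstoUniformlyOn (fun β z => 1 + ∑' n : ℕ, ((c n β : ℝ) : ℂ) * z ^ (n+1))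
      (fun z => 1 + ∑' n : ℕ, ((d n : ℝ) : ℂ) * z ^ (n+1)) l K := by
  rcases K.eq_empty_or_nonempty with rfl | hne
  · exact tendstoUniformlyOn_empty
  obtain ⟨z₀, hz₀K, hz₀⟩ := hKc.exists_isMaxOn hne continuous_norm.continuousOn
  set r : ℝ := ‖z₀‖ with hr
  have hr0 : 0 ≤ r := norm_nonneg _
  have hr1 : r < 1 := by simpa using hK hz₀K
  rw [Metric.tendstoUniformlyOn_iff]
  intro ε hε
  -- choose N
  have hpow : Tendsto (fun N : ℕ => 2 * r ^ (N+1) / (1 - r)) atTop (𝓝 0) := by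
    have := tendsto_pow_atTop_nhds_zero_of_lt_one hr0 hr1
    have h2 : Tendsto (fun N : ℕ => r ^ (N+1)) atTop (𝓝 0) :=
      this.comp (tendsto_add_atTop_nat 1)
    simpa using (h2.const_mul 2).div_const (1 - r)
  obtain ⟨N, hN⟩ := (hpow.eventually (gt_mem_nhds (by positivity : (0:ℝ) < ε/4))).exists
  -- eventual closeness of first N coefficients
  have hev : ∀ᶠ β in l, ∀ n ∈ Finset.range N, |c n β - d n| ≤ ε / (4 * (N+1)) := by
    rw [Filter.eventually_all_finset]
    intro n _
    have := (hlim n).eventually (Metric.closedBall_mem_nhds (d n) (by positivity : (0:ℝ) < ε/(4*(N+1))))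
    simpa [Metric.mem_closedBall, Real.dist_eq] using this
  filter_upwards [hev] with β hβ z hzK
  have hzr : ‖z‖ ≤ r := hz₀ hzK
  -- summability
  have hsc : Summable (fun n : ℕ => ((c n β : ℝ) : ℂ) * z ^ (n+1)) :=
    summable_aux hr0 hr1 _ (fun n => by rw [abs_le]; constructor <;> nlinarith [hc0 n β, hc1 n β]) hzr
  have hsd : Summable (fun n : ℕ => ((d n : ℝ) : ℂ) * z ^ (n+1)) :=
    summable_aux hr0 hr1 _ (fun n => by rw [abs_le]; constructor <;> nlinarith [hd0 n, hd1 n]) hzr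
  rw [dist_eq_norm]
  have key : (1 + ∑' n : ℕ, ((d n : ℝ) : ℂ) * z ^ (n+1)) -
      (1 + ∑' n : ℕ, ((c n β : ℝ) : ℂ) * z ^ (n+1)) =
      ∑' n : ℕ, ((d n - c n β : ℝ) : ℂ) * z ^ (n+1) := by
    have h0 : (1 + ∑' n : ℕ, ((d n : ℝ) : ℂ) * z ^ (n+1)) -
        (1 + ∑' n : ℕ, ((c n β : ℝ) : ℂ) * z ^ (n+1)) =
        (∑' n : ℕ, ((d n : ℝ) : ℂ) * z ^ (n+1)) -
        (∑' n : ℕ, ((c n β : ℝ) : ℂ) * z ^ (n+1)) := by ring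
    rw [h0, ← Summable.tsum_sub hsd hsc]
    apply tsum_congr
    intro n
    push_cast
    ring
  rw [key]
  -- norm bound
  set g : ℕ → ℝ := fun n => |d n - c n β| * ‖z‖ ^ (n+1) with hg
  have hgeo : Summable (fun n : ℕ => 2 * r ^ (n+1)) := by
    have := ((summable_geometric_of_lt_one hr0 hr1).comp_injective
      (add_left_injective 1)).mul_left 2
    simpa [Function.comp] using this
  have hgsum : Summable g := by
    apply Summable.of_nonneg_of_le (fun n => by positivity) (fun n => ?_) hgeo
    have h2 : ‖z‖ ^ (n+1) ≤ r ^ (n+1) := pow_le_pow_left₀ (norm_nonneg _) hzr _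
    have h3 : |d n - c n β| ≤ 2 := by
      rw [abs_le]; constructor <;> nlinarith [hd0 n, hd1 n, hc0 n β, hc1 n β]
    have h4 : (0:ℝ) ≤ ‖z‖ ^ (n+1) := by positivity
    show |d n - c n β| * ‖z‖ ^ (n+1) ≤ 2 * r ^ (n+1)
    nlinarith [abs_nonneg (d n - c n β)]
  have hnormeq : ∀ n : ℕ, ‖((d n - c n β : ℝ) : ℂ) * z ^ (n+1)‖ = g n := by
    intro n
    rw [hg, norm_mul, Complex.norm_real, norm_pow, Real.norm_eq_abs]
  have hgsum' : Summable (fun n : ℕ => ‖((d n - c n β : ℝ) : ℂ) * z ^ (n+1)‖) := by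
    simpa only [hnormeq] using hgsum
  have hnorm : ‖∑' n : ℕ, ((d n - c n β : ℝ) : ℂ) * z ^ (n+1)‖ ≤ ∑' n, g n := by
    calc ‖∑' n : ℕ, ((d n - c n β : ℝ) : ℂ) * z ^ (n+1)‖
        ≤ ∑' n : ℕ, ‖((d n - c n β : ℝ) : ℂ) * z ^ (n+1)‖ := norm_tsum_le_tsum_norm hgsum'
      _ = ∑' n, g n := tsum_congr hnormeq
  -- split head and tail
  have hsplit := Summable.sum_add_tsum_nat_add (f := g) N hgsum
  have hhead : ∑ n ∈ Finset.range N, g n ≤ ε / 4 := by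
    calc ∑ n ∈ Finset.range N, g n
        ≤ ∑ n ∈ Finset.range N, ε / (4 * (N+1)) := by
          apply Finset.sum_le_sum
          intro n hn
          have h1 := hβ n hn
          have h2 : ‖z‖ ^ (n+1) ≤ 1 := by
            apply pow_le_one₀ (norm_nonneg _) (le_trans hzr hr1.le)
          have h3 := abs_nonneg (d n - c n β)
          calc g n = |d n - c n β| * ‖z‖ ^ (n+1) := rfl
            _ ≤ |d n - c n β| * 1 := by nlinarith
            _ = |d n - c n β| := mul_one _
            _ ≤ ε / (4 * (N+1)) := by rwa [abs_sub_comm]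
      _ = N * (ε / (4 * (N+1))) := by rw [Finset.sum_const, Finset.card_range, nsmul_eq_mul]
      _ ≤ ε / 4 := by
          have hN1 : (0:ℝ) < (N:ℝ) + 1 := by positivity
          have h7 : (N:ℝ) * (ε / (4 * (N+1))) = ε/4 * ((N:ℝ)/((N:ℝ)+1)) := by
            field_simp
          have h8 : (N:ℝ)/((N:ℝ)+1) ≤ 1 := (div_le_one hN1).mpr (by linarith)
          rw [h7]
          nlinarith [hε.le]
  have htail : ∑' n : ℕ, g (n + N) ≤ 2 * r ^ (N+1) / (1 - r) := by
    have hb : ∀ n : ℕ, g (n + N) ≤ 2 * r ^ (N+1) * r ^ n := by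
      intro n
      have h3 : |d (n+N) - c (n+N) β| ≤ 2 := by
        rw [abs_le]
        constructor <;> nlinarith [hd0 (n+N), hd1 (n+N), hc0 (n+N) β, hc1 (n+N) β]
      have h2 : ‖z‖ ^ (n+N+1) ≤ r ^ (n+N+1) := pow_le_pow_left₀ (norm_nonneg _) hzr _
      have h4 : r ^ (n+N+1) = r ^ (N+1) * r ^ n := by ring
      have h5 : (0:ℝ) ≤ ‖z‖ ^ (n+N+1) := by positivity
      calc g (n+N) = |d (n+N) - c (n+N) β| * ‖z‖ ^ (n+N+1) := rfl
        _ ≤ 2 * r ^ (n+N+1) := by nlinarith [abs_nonneg (d (n+N) - c (n+N) β)]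
        _ = 2 * r ^ (N+1) * r ^ n := by rw [h4]; ring
    have hsg : Summable (fun n : ℕ => 2 * r ^ (N+1) * r ^ n) :=
      (summable_geometric_of_lt_one hr0 hr1).mul_left _
    calc ∑' n : ℕ, g (n + N)
        ≤ ∑' n : ℕ, 2 * r ^ (N+1) * r ^ n := by
          apply Summable.tsum_le_tsum hb ((summable_nat_add_iff N).mpr hgsum) hsg
      _ = 2 * r ^ (N+1) * (1 - r)⁻¹ := by
          rw [tsum_mul_left, tsum_geometric_of_lt_one hr0 hr1]
      _ = 2 * r ^ (N+1) / (1 - r) := by rw [div_eq_mul_inv]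
  have : ∑' n, g n ≤ ε / 4 + 2 * r ^ (N+1) / (1 - r) := by
    rw [← hsplit]; exact add_le_add hhead htail
  calc ‖∑' n : ℕ, ((d n - c n β : ℝ) : ℂ) * z ^ (n+1)‖ ≤ ∑' n, g n := hnorm
    _ ≤ ε / 4 + 2 * r ^ (N+1) / (1 - r) := this
    _ < ε / 4 + ε / 4 := by linarith [hN]
    _ < ε := by linarith

lemma tau_nonneg (β x : ℝ) : 0 ≤ tau β x := Int.fract_nonneg _
lemma tau_lt_one (β x : ℝ) : tau β x < 1 := Int.fract_lt_one _
lemma iter_nonneg (β : ℝ) (n : ℕ) : 0 ≤ (tau β)^[n] 1 := by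
  cases n with
  | zero => norm_num
  | succ n => rw [Function.iterate_succ_apply']; exact tau_nonneg _ _
lemma iter_le_one (β : ℝ) (n : ℕ) : (tau β)^[n] 1 ≤ 1 := by
  cases n with
  | zero => norm_num
  | succ n => rw [Function.iterate_succ_apply']; exact (tau_lt_one _ _).le
lemma tau_zero (β : ℝ) : tau β 0 = 0 := by simp [tau]
lemma iter_zero_of_zero (β : ℝ) {m : ℕ} (h : (tau β)^[m] 1 = 0) {n : ℕ} (hn : m ≤ n) :
    (tau β)^[n] 1 = 0 := by
  induction n with
  | zero => rw [Nat.le_zero.mp hn] at h; exact h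
  | succ n ih =>
    rcases Nat.lt_or_ge m (n+1) with h1 | h1
    · rw [Function.iterate_succ_apply', ih (Nat.lt_succ_iff.mp h1), tau_zero]
    · rw [Nat.le_antisymm hn h1] at h; exact h

/-- If the orbit value is positive and `β₀ · x_n` is an integer, then `β₀` is simple
(witnessed at step `n+1`). -/
lemma simple_of_int (β₀ : ℝ) (hβ₀ : 1 < β₀) {n : ℕ} (hpos : 0 < (tau β₀)^[n] 1)
    {m : ℤ} (hm : β₀ * (tau β₀)^[n] 1 = m) :
    1 ≤ n + 1 ∧ ∃ k : ℕ, 1 ≤ k ∧ (k : ℤ) ≤ ⌊β₀⌋ ∧ (tau β₀)^[(n+1) - 1] 1 = (k : ℝ) / β₀ := by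
  have hβ0 : (0:ℝ) < β₀ := by linarith
  have hm0 : (0:ℝ) < m := by rw [← hm]; positivity
  have hm1 : 1 ≤ m := by
    have : 0 < m := by exact_mod_cast hm0
    omega
  have hmβ : (m:ℝ) ≤ β₀ := by
    rw [← hm]
    nlinarith [iter_le_one β₀ n]
  refine ⟨le_add_self, m.toNat, ?_, ?_, ?_⟩
  · omega
  · rw [Int.toNat_of_nonneg (by omega)]; exact Int.le_floor.mpr hmβ
  · have : ((m.toNat : ℕ) : ℝ) = (m : ℝ) := by
      rw [← Int.cast_natCast, Int.toNat_of_nonneg (by omega)]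
    rw [Nat.add_sub_cancel, this, eq_div_iff (ne_of_gt hβ0), mul_comm, hm]

lemma not_int_of_not_simple (β₀ : ℝ) (hβ₀ : 1 < β₀) (hns : ¬ IsSimpleBeta β₀) (n : ℕ)
    (hpos : 0 < (tau β₀)^[n] 1) (m : ℤ) : β₀ * (tau β₀)^[n] 1 ≠ m := by
  intro hm
  exact hns ⟨n + 1, simple_of_int β₀ hβ₀ hpos hm⟩

section Simple
variable (β₀ : ℝ) (hβ₀ : 1 < β₀) (hs : IsSimpleBeta β₀)

lemma Lmem (hs : IsSimpleBeta β₀) :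
    1 ≤ Lpt β₀ 1 ∧ ∃ k : ℕ, 1 ≤ k ∧ (k : ℤ) ≤ ⌊β₀⌋ ∧
      (tau β₀)^[Lpt β₀ 1 - 1] 1 = (k : ℝ) / β₀ :=
  Nat.sInf_mem hs

lemma pos_of_lt_L (hβ₀ : 1 < β₀) (hs : IsSimpleBeta β₀) {r : ℕ} (hr : r < Lpt β₀ 1) :
    0 < (tau β₀)^[r] 1 := by
  obtain ⟨hL1, k, hk1, hk2, hkL⟩ := Lmem β₀ hs
  rcases lt_or_ge 0 ((tau β₀)^[r] 1) with h | h
  · exact h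
  have h0 : (tau β₀)^[r] 1 = 0 := le_antisymm h (iter_nonneg _ _)
  have h1 : (tau β₀)^[Lpt β₀ 1 - 1] 1 = 0 := iter_zero_of_zero β₀ h0 (by omega)
  rw [hkL] at h1
  have : (0:ℝ) < (k:ℝ) / β₀ := by positivity
  linarith

lemma int_at_L (hβ₀ : 1 < β₀) (hs : IsSimpleBeta β₀) :
    ∃ m : ℤ, 1 ≤ m ∧ β₀ * (tau β₀)^[Lpt β₀ 1 - 1] 1 = m := by
  obtain ⟨hL1, k, hk1, hk2, hkL⟩ := Lmem β₀ hs
  refine ⟨(k:ℤ), by exact_mod_cast hk1, ?_⟩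
  rw [hkL]
  push_cast
  field_simp

lemma eq_Lsub1_of_int (hβ₀ : 1 < β₀) (hs : IsSimpleBeta β₀) {r : ℕ} (hr : r < Lpt β₀ 1)
    {m : ℤ} (hm : β₀ * (tau β₀)^[r] 1 = m) : r = Lpt β₀ 1 - 1 := by
  have hpos := pos_of_lt_L β₀ hβ₀ hs hr
  have hmem : r + 1 ∈ {n : ℕ | 1 ≤ n ∧ ∃ k : ℕ, 1 ≤ k ∧ (k : ℤ) ≤ ⌊β₀⌋ ∧
      (tau β₀)^[n - 1] 1 = (k : ℝ) / β₀} := simple_of_int β₀ hβ₀ hpos hm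
  have := Nat.sInf_le hmem
  have : Lpt β₀ 1 ≤ r + 1 := this
  omega

end Simple

lemma orbit_right (β₀ : ℝ) (hβ₀ : 1 < β₀) (n : ℕ) :
    ∃ ε > 0, MonotoneOn (fun β => (tau β)^[n] 1) (Set.Ico β₀ (β₀+ε)) ∧
      Tendsto (fun β => (tau β)^[n] 1) (𝓝[≥] β₀) (𝓝 ((tau β₀)^[n] 1)) := by
  induction n with
  | zero =>
    refine ⟨1, one_pos, ?_, ?_⟩
    · simp [MonotoneOn]
    · simpa using tendsto_const_nhds
  | succ n ih =>
    obtain ⟨ε, hε, hmono, htend⟩ := ih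
    set x : ℝ → ℝ := fun β => (tau β)^[n] 1 with hx
    set t : ℝ → ℝ := fun β => β * x β with ht
    set y : ℝ := β₀ * x β₀ with hy
    have hβ₀mem : β₀ ∈ Set.Ico β₀ (β₀+ε) := ⟨le_refl _, by linarith⟩
    have htmono : MonotoneOn t (Set.Ico β₀ (β₀+ε)) := by
      intro a ha b hb hab
      exact mul_le_mul hab (hmono ha hb hab) (iter_nonneg a n)
        (by have := hb.1; linarith)
    have httend : Tendsto t (𝓝[≥] β₀) (𝓝 y) := by
      have hid : Tendsto (fun β : ℝ => β) (𝓝[≥] β₀) (𝓝 β₀) :=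
        tendsto_id.mono_left nhdsWithin_le_nhds
      exact hid.mul htend
    have hev1 : ∀ᶠ β in 𝓝[≥] β₀, t β < (⌊y⌋ : ℝ) + 1 :=
      httend.eventually_lt_const (Int.lt_floor_add_one y)
    have hev2 : Set.Ico β₀ (β₀+ε) ∈ 𝓝[≥] β₀ := Ico_mem_nhdsGE hβ₀mem.2
    have hE : {β : ℝ | β ∈ Set.Ico β₀ (β₀+ε) ∧ t β < (⌊y⌋ : ℝ) + 1} ∈ 𝓝[≥] β₀ :=
      Filter.inter_mem hev2 hev1
    obtain ⟨u, hu, hsub⟩ := mem_nhdsGE_iff_exists_Ico_subset.mp hE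
    have hu' : β₀ < u := hu
    -- on Ico β₀ u, the floor is constant and x_{n+1} = t - ⌊y⌋
    have hfl : ∀ β ∈ Set.Ico β₀ u, ⌊t β⌋ = ⌊y⌋ := by
      intro β hβ
      obtain ⟨hβ1, hβ2⟩ := hsub hβ
      have h3 : y ≤ t β := htmono hβ₀mem hβ1 hβ1.1
      rw [Int.floor_eq_iff]
      exact ⟨le_trans (Int.floor_le y) h3, hβ2⟩
    have hrep : ∀ β ∈ Set.Ico β₀ u, (tau β)^[n+1] 1 = t β - (⌊y⌋ : ℝ) := by
      intro β hβ
      rw [Function.iterate_succ_apply']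
      show β * x β - (⌊β * x β⌋ : ℝ) = t β - (⌊y⌋ : ℝ)
      rw [show β * x β = t β from rfl, hfl β hβ]
    refine ⟨u - β₀, by linarith, ?_, ?_⟩
    · intro a ha b hb hab
      have ha' : a ∈ Set.Ico β₀ u := by simp only [Set.mem_Ico] at ha ⊢; constructor <;> linarith [ha.1, ha.2]
      have hb' : b ∈ Set.Ico β₀ u := by simp only [Set.mem_Ico] at hb ⊢; constructor <;> linarith [hb.1, hb.2]
      simp only [hrep a ha', hrep b hb']
      have := htmono (hsub ha').1 (hsub hb').1 hab
      linarith
    · have hIu : Set.Ico β₀ u ∈ 𝓝[≥] β₀ := Ico_mem_nhdsGE hu'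
      have heq : (fun β => (tau β)^[n+1] 1) =ᶠ[𝓝[≥] β₀] (fun β => t β - (⌊y⌋ : ℝ)) :=
        Filter.eventually_of_mem hIu hrep
      have hlim : Tendsto (fun β => t β - (⌊y⌋ : ℝ)) (𝓝[≥] β₀) (𝓝 (y - ⌊y⌋)) :=
        httend.sub_const _
      have hval : (tau β₀)^[n+1] 1 = y - (⌊y⌋ : ℝ) := by
        rw [Function.iterate_succ_apply']; rfl
      rw [hval]
      exact hlim.congr' heq.symm



lemma mod_succ_wrap {j L : ℕ} (h : j % L = L - 1) (hL : 1 ≤ L) : (j+1) % L = 0 := by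
  have hdm := Nat.div_add_mod j L
  have h3 : j + 1 = L * (j / L) + L := by omega
  rw [h3, ← Nat.mul_succ, Nat.mul_mod_right]

lemma mod_succ_nowrap {j L : ℕ} (h : j % L + 1 < L) : (j+1) % L = j % L + 1 := by
  have h2 : 1 < L := by omega
  rw [Nat.add_mod, Nat.mod_eq_of_lt h2, Nat.mod_eq_of_lt h]

lemma orbit_left_ns (β₀ : ℝ) (hβ₀ : 1 < β₀) (hns : ¬ IsSimpleBeta β₀) (j : ℕ) :
    Tendsto (fun β => (tau β)^[j] 1) (𝓝[<] β₀) (𝓝 ((tau β₀)^[j] 1)) ∧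
      ∀ᶠ β in 𝓝[<] β₀, (tau β)^[j] 1 ≤ (tau β₀)^[j] 1 := by
  have hIoo : ∀ᶠ β in 𝓝[<] β₀, β ∈ Set.Ioo (β₀-1) β₀ :=
    Filter.eventually_of_mem (Ioo_mem_nhdsLT_of_mem ⟨by linarith, le_refl _⟩) (fun _ h => h)
  induction j with
  | zero => exact ⟨by simpa using tendsto_const_nhds, by simp⟩
  | succ j ih =>
    obtain ⟨htd, hub⟩ := ih
    by_cases hz : (tau β₀)^[j] 1 = 0
    · have hev : ∀ᶠ β in 𝓝[<] β₀, (tau β)^[j+1] 1 = 0 := by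
        filter_upwards [hub] with β hβ
        have h0 : (tau β)^[j] 1 = 0 := le_antisymm (hz ▸ hβ) (iter_nonneg _ _)
        rw [Function.iterate_succ_apply', h0, tau_zero]
      have hval : (tau β₀)^[j+1] 1 = 0 := by
        rw [Function.iterate_succ_apply', hz, tau_zero]
      constructor
      · rw [hval]
        exact tendsto_const_nhds.congr' (by filter_upwards [hev] with β h; rw [h])
      · filter_upwards [hev] with β h; rw [h, hval]
    · have hpos : 0 < (tau β₀)^[j] 1 := lt_of_le_of_ne (iter_nonneg _ _) (Ne.symm hz)
      set y : ℝ := β₀ * (tau β₀)^[j] 1 with hy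
      have hni : ∀ m : ℤ, y ≠ m := not_int_of_not_simple β₀ hβ₀ hns j hpos
      have hy1 : (⌊y⌋ : ℝ) < y := lt_of_le_of_ne (Int.floor_le y) (Ne.symm (hni ⌊y⌋))
      have hy2 : y < (⌊y⌋ : ℝ) + 1 := Int.lt_floor_add_one y
      have httend : Tendsto (fun β => β * (tau β)^[j] 1) (𝓝[<] β₀) (𝓝 y) :=
        (tendsto_id.mono_left nhdsWithin_le_nhds).mul htd
      have hev1 := httend.eventually_const_lt hy1
      have hev2 := httend.eventually_lt_const hy2
      have htle : ∀ᶠ β in 𝓝[<] β₀, β * (tau β)^[j] 1 ≤ y := by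
        filter_upwards [hub, hIoo] with β h1 h2
        exact mul_le_mul h2.2.le h1 (iter_nonneg _ _) (by linarith)
      have hrep : ∀ᶠ β in 𝓝[<] β₀,
          (tau β)^[j+1] 1 = β * (tau β)^[j] 1 - (⌊y⌋ : ℝ) := by
        filter_upwards [hev1, hev2] with β h1 h2
        rw [Function.iterate_succ_apply']
        show β * (tau β)^[j] 1 - (⌊β * (tau β)^[j] 1⌋ : ℝ) = _
        rw [Int.floor_eq_iff.mpr ⟨h1.le, h2⟩]
      have hval : (tau β₀)^[j+1] 1 = y - (⌊y⌋ : ℝ) := by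
        rw [Function.iterate_succ_apply']; rfl
      constructor
      · rw [hval]
        exact (httend.sub_const _).congr'
          (by filter_upwards [hrep] with β h; rw [h])
      · filter_upwards [hrep, htle] with β h1 h2
        rw [h1, hval]; linarith

lemma orbit_left_simple (β₀ : ℝ) (hβ₀ : 1 < β₀) (hs : IsSimpleBeta β₀) (j : ℕ) :
    Tendsto (fun β => (tau β)^[j] 1) (𝓝[<] β₀) (𝓝 ((tau β₀)^[j % Lpt β₀ 1] 1)) ∧
      ∀ᶠ β in 𝓝[<] β₀, (tau β)^[j] 1 ≤ (tau β₀)^[j % Lpt β₀ 1] 1 := by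
  have hIoo : ∀ᶠ β in 𝓝[<] β₀, β ∈ Set.Ioo (β₀-1) β₀ :=
    Filter.eventually_of_mem (Ioo_mem_nhdsLT_of_mem ⟨by linarith, le_refl _⟩) (fun _ h => h)
  obtain ⟨hL1, k0, hk01, hk02, hk0L⟩ := Lmem β₀ hs
  set L : ℕ := Lpt β₀ 1 with hLdef
  induction j with
  | zero =>
    rw [Nat.zero_mod]
    exact ⟨by simpa using tendsto_const_nhds, by simp⟩
  | succ j ih =>
    obtain ⟨htd, hub⟩ := ih
    set r : ℕ := j % L with hrdef
    have hrL : r < L := Nat.mod_lt _ (by omega)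
    have hepos : 0 < (tau β₀)^[r] 1 := pos_of_lt_L β₀ hβ₀ hs hrL
    set y : ℝ := β₀ * (tau β₀)^[r] 1 with hy
    have httend : Tendsto (fun β => β * (tau β)^[j] 1) (𝓝[<] β₀) (𝓝 y) :=
      (tendsto_id.mono_left nhdsWithin_le_nhds).mul htd
    have htle : ∀ᶠ β in 𝓝[<] β₀, β * (tau β)^[j] 1 ≤ y := by
      filter_upwards [hub, hIoo] with β h1 h2
      exact mul_le_mul h2.2.le h1 (iter_nonneg _ _) (by linarith)
    by_cases hint : ∃ m : ℤ, y = m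
    · -- wrap-around step
      obtain ⟨m, hm⟩ := hint
      have hrL1 : r = L - 1 := eq_Lsub1_of_int β₀ hβ₀ hs hrL hm
      have hmod : (j+1) % L = 0 := mod_succ_wrap (hrdef ▸ hrL1) hL1
      have hm1 : (1:ℝ) ≤ m := by
        have h0 : (0:ℝ) < m := by rw [← hm]; positivity
        exact_mod_cast (by exact_mod_cast h0 : (0:ℤ) < m)
      have htlt : ∀ᶠ β in 𝓝[<] β₀, β * (tau β)^[j] 1 < y := by
        filter_upwards [hub, hIoo] with β h1 h2
        rcases eq_or_lt_of_le (iter_nonneg β j) with h3 | h3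
        · rw [← h3, mul_zero]; positivity
        · calc β * (tau β)^[j] 1 < β₀ * (tau β)^[j] 1 := by nlinarith [h2.2]
            _ ≤ y := by rw [hy]; nlinarith
      have hev1 : ∀ᶠ β in 𝓝[<] β₀, (m:ℝ) - 1 < β * (tau β)^[j] 1 :=
        httend.eventually_const_lt (by rw [hm] at *; linarith)
      have hrep : ∀ᶠ β in 𝓝[<] β₀,
          (tau β)^[j+1] 1 = β * (tau β)^[j] 1 - ((m:ℝ) - 1) := by
        filter_upwards [hev1, htlt] with β h1 h2
        rw [Function.iterate_succ_apply']
        show β * (tau β)^[j] 1 - (⌊β * (tau β)^[j] 1⌋ : ℝ) = _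
        have : ⌊β * (tau β)^[j] 1⌋ = m - 1 := by
          rw [Int.floor_eq_iff]
          constructor
          · push_cast; linarith
          · push_cast; rw [hm] at h2; linarith
        rw [this]; push_cast; ring
      have hval : (tau β₀)^[(j+1) % L] 1 = 1 := by rw [hmod]; simp
      constructor
      · rw [hval]
        have : Tendsto (fun β => β * (tau β)^[j] 1 - ((m:ℝ) - 1)) (𝓝[<] β₀)
            (𝓝 (y - ((m:ℝ) - 1))) := httend.sub_const _
        rw [hm] at this
        have h1 : (m:ℝ) - ((m:ℝ) - 1) = 1 := by ring
        rw [h1] at this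
        exact this.congr' (by filter_upwards [hrep] with β h; rw [h])
      · filter_upwards [hrep, htlt] with β h1 h2
        rw [h1, hval, hm] at *
        linarith
    · -- no-wrap step
      have hni : ∀ m : ℤ, y ≠ m := fun m hm => hint ⟨m, hm⟩
      have hrne : r ≠ L - 1 := by
        intro hr
        obtain ⟨m, _, hm⟩ := int_at_L β₀ hβ₀ hs
        exact hni m (by rw [hy, hr, hLdef]; exact hm)
      have hr1L : r + 1 < L := by omega
      have hmod : (j+1) % L = r + 1 := mod_succ_nowrap (by rw [← hrdef]; omega)
      have hy1 : (⌊y⌋ : ℝ) < y := lt_of_le_of_ne (Int.floor_le y) (Ne.symm (hni ⌊y⌋))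
      have hy2 : y < (⌊y⌋ : ℝ) + 1 := Int.lt_floor_add_one y
      have hev1 := httend.eventually_const_lt hy1
      have hev2 := httend.eventually_lt_const hy2
      have hrep : ∀ᶠ β in 𝓝[<] β₀,
          (tau β)^[j+1] 1 = β * (tau β)^[j] 1 - (⌊y⌋ : ℝ) := by
        filter_upwards [hev1, hev2] with β h1 h2
        rw [Function.iterate_succ_apply']
        show β * (tau β)^[j] 1 - (⌊β * (tau β)^[j] 1⌋ : ℝ) = _
        rw [Int.floor_eq_iff.mpr ⟨h1.le, h2⟩]
      have hval : (tau β₀)^[(j+1) % L] 1 = y - (⌊y⌋ : ℝ) := by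
        rw [hmod, Function.iterate_succ_apply']; rfl
      constructor
      · rw [hval]
        exact (httend.sub_const _).congr'
          (by filter_upwards [hrep] with β h; rw [h])
      · filter_upwards [hrep, htle] with β h1 h2
        rw [h1, hval]; linarith


lemma summable_coeff {z : ℂ} (hz : ‖z‖ < 1) (a : ℕ → ℝ) (h0 : ∀ n, 0 ≤ a n)
    (h1 : ∀ n, a n ≤ 1) : Summable (fun n : ℕ => ((a n : ℝ) : ℂ) * z ^ n) := by
  apply Summable.of_norm_bounded (summable_geometric_of_lt_one (norm_nonneg _) hz)
  intro n
  rw [norm_mul, Complex.norm_real, norm_pow, Real.norm_eq_abs, abs_of_nonneg (h0 n)]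
  nlinarith [pow_nonneg (norm_nonneg z) n, pow_le_pow_left₀ (norm_nonneg z) (le_refl ‖z‖) n,
    h1 n, pow_nonneg (norm_nonneg z) n]

lemma iter_L_eq_zero (β₀ : ℝ) (hβ₀ : 1 < β₀) (hs : IsSimpleBeta β₀) :
    (tau β₀)^[Lpt β₀ 1] 1 = 0 := by
  obtain ⟨hL1, k, hk1, hk2, hkL⟩ := Lmem β₀ hs
  have h1 : Lpt β₀ 1 = (Lpt β₀ 1 - 1) + 1 := by omega
  rw [h1, Function.iterate_succ_apply', hkL]
  have hβ0 : β₀ ≠ 0 := by linarith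
  show β₀ * ((k:ℝ)/β₀) - (⌊β₀ * ((k:ℝ)/β₀)⌋ : ℝ) = 0
  rw [mul_div_cancel₀ _ hβ0]
  rw [show ((k:ℝ)) = ((k:ℤ):ℝ) by push_cast; ring, Int.floor_intCast]
  ring

lemma target_eq (β₀ : ℝ) (hβ₀ : 1 < β₀) (hs : IsSimpleBeta β₀) {z : ℂ} (hz : ‖z‖ < 1) :
    PsiU β₀ z / (1 - z ^ Lpt β₀ 1) =
      1 + ∑' n : ℕ, (((tau β₀)^[(n+1) % Lpt β₀ 1] 1 : ℝ) : ℂ) * z ^ (n+1) := by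
  obtain ⟨hL1, k, hk1, hk2, hkL⟩ := Lmem β₀ hs
  set L : ℕ := Lpt β₀ 1 with hLdef
  set f : ℕ → ℂ := fun n => (((tau β₀)^[n % L] 1 : ℝ) : ℂ) * z ^ n with hf
  set g : ℕ → ℂ := fun n => (((tau β₀)^[n] 1 : ℝ) : ℂ) * z ^ n with hg
  have hsumf : Summable f := summable_coeff hz _ (fun n => iter_nonneg _ _) (fun n => iter_le_one _ _)
  have hsumg : Summable g := summable_coeff hz _ (fun n => iter_nonneg _ _) (fun n => iter_le_one _ _)
  have hzero : ∀ n, L ≤ n → (tau β₀)^[n] 1 = 0 :=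
    fun n hn => iter_zero_of_zero β₀ (iter_L_eq_zero β₀ hβ₀ hs) hn
  -- PsiU = tsum g
  have hPsi : PsiU β₀ z = ∑' n, g n := by
    rw [PsiU, ← Summable.sum_add_tsum_nat_add 1 hsumg]
    congr 1
    simp [hg]
  -- RHS = tsum f
  have hRHS : (1 : ℂ) + ∑' n : ℕ, (((tau β₀)^[(n+1) % L] 1 : ℝ) : ℂ) * z ^ (n+1) = ∑' n, f n := by
    rw [← Summable.sum_add_tsum_nat_add 1 hsumf]
    congr 1
    simp [hf]
  -- tsum g = head sum
  have hgA : ∑' n, g n = ∑ n ∈ Finset.range L, g n := by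
    rw [← Summable.sum_add_tsum_nat_add L hsumg]
    have : ∀ n : ℕ, g (n + L) = 0 := by
      intro n
      rw [hg]
      simp [hzero (n + L) (by omega)]
    rw [tsum_congr this, tsum_zero, add_zero]
  -- tsum f * (1 - z^L) = head sum
  have hfper : ∀ n : ℕ, f (n + L) = f n * z ^ L := by
    intro n
    rw [hf]
    simp only []
    rw [Nat.add_mod_right, pow_add]
    ring
  have hkey : (∑' n, f n) * (1 - z ^ L) = ∑ n ∈ Finset.range L, f n := by
    have h1 : (∑' n, f n) * z ^ L = ∑' n, f (n + L) := by
      rw [← tsum_mul_right]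
      exact tsum_congr (fun n => (hfper n).symm)
    have h2 := Summable.sum_add_tsum_nat_add L hsumf
    have : (∑' n, f n) * (1 - z ^ L) = (∑' n, f n) - (∑' n, f n) * z ^ L := by ring
    rw [this, h1, ← h2]
    ring
  -- heads agree
  have hheads : ∑ n ∈ Finset.range L, g n = ∑ n ∈ Finset.range L, f n := by
    apply Finset.sum_congr rfl
    intro n hn
    rw [hf, hg]
    simp only []
    rw [Nat.mod_eq_of_lt (Finset.mem_range.mp hn)]
  -- nonvanishing denominator
  have hne : (1 : ℂ) - z ^ L ≠ 0 := by
    intro h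
    have h1 : z ^ L = 1 := by
      have := sub_eq_zero.mp h
      exact this.symm
    have h2 : ‖z ^ L‖ < 1 := by
      rw [norm_pow]
      exact pow_lt_one₀ (norm_nonneg _) hz (by omega)
    rw [h1] at h2
    simp at h2
  rw [hPsi, hRHS, hgA, hheads, ← hkey, mul_div_assoc, div_self hne, mul_one]

theorem stmt8 (β₀ : ℝ) (hβ₀ : 1 < β₀) :
    (∀ K : Set ℂ, K ⊆ Metric.ball 0 1 → IsCompact K →
      TendstoUniformlyOn (fun β : ℝ => PsiU β) (PsiU β₀)
        (nhdsWithin β₀ (Set.Ioi β₀)) K) ∧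
    (¬ IsSimpleBeta β₀ →
      ∀ K : Set ℂ, K ⊆ Metric.ball 0 1 → IsCompact K →
        TendstoUniformlyOn (fun β : ℝ => PsiU β) (PsiU β₀) (nhds β₀) K) ∧
    (IsSimpleBeta β₀ →
      ∀ K : Set ℂ, K ⊆ Metric.ball 0 1 → IsCompact K →
        TendstoUniformlyOn (fun β : ℝ => PsiU β)
          (fun z => PsiU β₀ z / (1 - z ^ Lpt β₀ 1))
          (nhdsWithin β₀ (Set.Iio β₀)) K) := by
  constructor
  · intro K hK hKc
    exact unif_of_coeff (𝓝[>] β₀) (fun n β => (tau β)^[n+1] 1) (fun n => (tau β₀)^[n+1] 1)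
      (fun n β => iter_nonneg β (n+1)) (fun n β => iter_le_one β (n+1))
      (fun n => iter_nonneg β₀ (n+1)) (fun n => iter_le_one β₀ (n+1))
      (fun n => ((orbit_right β₀ hβ₀ (n+1)).choose_spec.2.2).mono_left
        (nhdsWithin_mono β₀ Set.Ioi_subset_Ici_self)) K hK hKc
  constructor
  · intro hns K hK hKc
    exact unif_of_coeff (𝓝 β₀) (fun n β => (tau β)^[n+1] 1) (fun n => (tau β₀)^[n+1] 1)
      (fun n β => iter_nonneg β (n+1)) (fun n β => iter_le_one β (n+1))
      (fun n => iter_nonneg β₀ (n+1)) (fun n => iter_le_one β₀ (n+1))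
      (fun n => by
        rw [← nhdsLT_sup_nhdsGE β₀]
        exact tendsto_sup.mpr ⟨(orbit_left_ns β₀ hβ₀ hns (n+1)).1,
          (orbit_right β₀ hβ₀ (n+1)).choose_spec.2.2⟩) K hK hKc
  · intro hs K hK hKc
    have h := unif_of_coeff (𝓝[<] β₀) (fun n β => (tau β)^[n+1] 1)
      (fun n => (tau β₀)^[(n+1) % Lpt β₀ 1] 1)
      (fun n β => iter_nonneg β (n+1)) (fun n β => iter_le_one β (n+1))
      (fun n => iter_nonneg β₀ _) (fun n => iter_le_one β₀ _)
      (fun n => (orbit_left_simple β₀ hβ₀ hs (n+1)).1) K hK hKc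
    exact h.congr_right (fun z hz => (target_eq β₀ hβ₀ hs
      (by have := hK hz; rwa [Metric.mem_ball, dist_zero_right] at this)).symm)
end

section
/- Let β > 1 be simple with L = L(1). Then for every z ∈ ℂ with |z| < β one has (1 − (z/β)^L)·(1 − φ̂_β(z)) = 1 − φ_β(z); equivalently, 1 − φ̂_β(z) = (1 − φ_β(z))/(1 − (z/β)^L), the denominator being nonzero since |z/β| < 1. -/
open scoped BigOperators

theorem stmt10 (β : ℝ) (hβ : 1 < β) (hsimple : IsSimpleBeta β) (z : ℂ)
    (hz : ‖z‖ < β) :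
    (1 - (z / (β : ℂ)) ^ Lpt β 1) * (1 - phiHat β z) = 1 - phi β z ∧
    1 - (z / (β : ℂ)) ^ Lpt β 1 ≠ 0 := by
  have hβ0 : (0:ℝ) < β := lt_trans one_pos hβ
  set w : ℂ := z / (β:ℂ) with hw_def
  have hw : ‖w‖ < 1 := by
    rw [hw_def, norm_div, Complex.norm_real, Real.norm_eq_abs, abs_of_pos hβ0]
    exact (div_lt_one hβ0).mpr hz
  set L := Lpt β 1 with hL_def
  have hmem : L ∈ {n : ℕ | 1 ≤ n ∧ ∃ k : ℕ, 1 ≤ k ∧ (k : ℤ) ≤ ⌊β⌋ ∧ (tau β)^[n - 1] 1 = (k : ℝ) / β} :=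
    Nat.sInf_mem hsimple
  obtain ⟨hL1, k, hk1, hkβ, hkeq⟩ := hmem
  -- tau at 0
  have htauz : tau β 0 = 0 := by unfold tau; simp
  -- τ^L 1 = 0
  have htauL : (tau β)^[L] 1 = 0 := by
    have hLe : L = (L - 1) + 1 := (Nat.succ_pred_eq_of_pos hL1).symm
    rw [hLe, Function.iterate_succ_apply', hkeq]
    unfold tau
    have h1 : β * ((k:ℝ) / β) = (k:ℝ) := by field_simp
    rw [h1]
    simp
  have htau0 : ∀ n, L ≤ n → (tau β)^[n] 1 = 0 := by
    intro n hn
    obtain ⟨m, rfl⟩ := Nat.exists_eq_add_of_le hn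
    induction m with
    | zero => simpa using htauL
    | succ m ih =>
      have : L + (m + 1) = (L + m) + 1 := by omega
      rw [this, Function.iterate_succ_apply', ih (by omega)]
      exact htauz
  have hdig0 : ∀ n, L + 1 ≤ n → dig β 1 n = 0 := by
    intro n hn
    unfold dig
    rw [htau0 (n-1) (by omega)]
    simp
  -- range of iterates
  have hfr : ∀ x : ℝ, tau β x = Int.fract (β * x) := fun x => rfl
  have hiter : ∀ m : ℕ, 0 ≤ (tau β)^[m] 1 ∧ (tau β)^[m] 1 ≤ 1 := by
    intro m
    cases m with
    | zero => norm_num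
    | succ m =>
      rw [Function.iterate_succ_apply', hfr]
      exact ⟨Int.fract_nonneg _, (Int.fract_lt_one _).le⟩
  have hdigb : ∀ n, 0 ≤ dig β 1 n ∧ dig β 1 n ≤ ⌊β⌋ := by
    intro n
    unfold dig
    constructor
    · exact Int.floor_nonneg.mpr (mul_nonneg hβ0.le (hiter _).1)
    · have : β * (tau β)^[n-1] 1 ≤ β := by
        nlinarith [(hiter (n-1)).2, (hiter (n-1)).1]
      exact Int.floor_le_floor this
  have hβfloor : (1:ℤ) ≤ ⌊β⌋ := by exact_mod_cast Int.le_floor.mpr (by exact_mod_cast hβ.le)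
  have hdigR : ∀ n, |(dig β 1 n : ℝ)| ≤ β := by
    intro n
    rw [abs_of_nonneg (by exact_mod_cast (hdigb n).1)]
    calc ((dig β 1 n : ℝ)) ≤ (⌊β⌋ : ℝ) := by exact_mod_cast (hdigb n).2
      _ ≤ β := Int.floor_le β
  have hqdigR : ∀ n, |(qdig β n : ℝ)| ≤ β := by
    intro n
    unfold qdig
    rw [if_pos hsimple]
    split
    · have hd0 : (0:ℝ) ≤ ((dig β 1 (Lpt β 1) : ℤ) : ℝ) := by
        exact_mod_cast (hdigb (Lpt β 1)).1
      have hdU : ((dig β 1 (Lpt β 1) : ℤ) : ℝ) ≤ β := by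
        calc ((dig β 1 (Lpt β 1) : ℤ) : ℝ) ≤ (⌊β⌋ : ℝ) := by exact_mod_cast (hdigb (Lpt β 1)).2
          _ ≤ β := Int.floor_le β
      push_cast
      rw [abs_le]
      constructor <;> linarith
    · exact hdigR _
  -- summability helper
  have hsum : ∀ c : ℕ → ℤ, (∀ n, |(c n : ℝ)| ≤ β) →
      Summable (fun n : ℕ => (c (n+1) : ℂ) * w ^ (n+1)) := by
    intro c hc
    apply Summable.of_norm_bounded (g := fun n => (β * ‖w‖) * ‖w‖ ^ n)
    · exact (summable_geometric_of_lt_one (norm_nonneg w) hw).mul_left _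
    · intro n
      rw [norm_mul, norm_pow]
      have h1 : ‖((c (n+1) : ℤ) : ℂ)‖ = |(c (n+1) : ℝ)| := by
        rw [show ((c (n+1) : ℤ) : ℂ) = (((c (n+1) : ℤ) : ℝ) : ℂ) by push_cast; ring,
          Complex.norm_real, Real.norm_eq_abs]
      rw [h1]
      have : ‖w‖ ^ (n+1) = ‖w‖ * ‖w‖ ^ n := by ring
      calc |(c (n+1):ℝ)| * ‖w‖ ^ (n+1) ≤ β * ‖w‖ ^ (n+1) := by
            apply mul_le_mul_of_nonneg_right (hc _) (by positivity)
        _ = β * ‖w‖ * ‖w‖ ^ n := by ring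
  have hfphiHat : Summable (fun n : ℕ => (qdig β (n+1) : ℂ) * w ^ (n+1)) :=
    hsum _ hqdigR
  -- phi is finite sum
  have hphi : phi β z = ∑ n ∈ Finset.range L, (dig β 1 (n+1) : ℂ) * w ^ (n+1) := by
    unfold phi
    rw [← hw_def]
    apply tsum_eq_sum
    intro n hn
    have : L + 1 ≤ n + 1 := by
      simp only [Finset.mem_range, not_lt] at hn; omega
    rw [hdig0 _ this]
    simp
  -- periodicity of qdig
  have hper : ∀ n : ℕ, qdig β (n + L + 1) = qdig β (n + 1) := by
    intro n
    unfold qdig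
    rw [if_pos hsimple, if_pos hsimple]
    simp only [← hL_def]
    have h1 : (n + L + 1 - 1) % L = (n + 1 - 1) % L := by
      rw [show n + L + 1 - 1 = n + L by omega, show n + 1 - 1 = n by omega]
      exact Nat.add_mod_right n L
    rw [h1]
  -- split phiHat
  have hsplit : (∑ n ∈ Finset.range L, (qdig β (n+1) : ℂ) * w ^ (n+1)) +
      ∑' n : ℕ, (qdig β (n+L+1) : ℂ) * w ^ (n+L+1) = phiHat β z := by
    unfold phiHat
    rw [← hw_def]
    exact hfphiHat.sum_add_tsum_nat_add L
  have htail : (∑' n : ℕ, (qdig β (n+L+1) : ℂ) * w ^ (n+L+1)) = w ^ L * phiHat β z := by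
    have h1 : ∀ n : ℕ, (qdig β (n+L+1) : ℂ) * w ^ (n+L+1) =
        w ^ L * ((qdig β (n+1) : ℂ) * w ^ (n+1)) := by
      intro n
      rw [hper n]
      rw [show n + L + 1 = L + (n + 1) by omega, pow_add]
      ring
    rw [tsum_congr h1, tsum_mul_left]
    unfold phiHat
    rw [← hw_def]
  -- the block sum
  have hblock : (∑ n ∈ Finset.range L, (qdig β (n+1) : ℂ) * w ^ (n+1)) =
      (∑ n ∈ Finset.range L, (dig β 1 (n+1) : ℂ) * w ^ (n+1)) - w ^ L := by
    have hco : ∀ n ∈ Finset.range L, (qdig β (n+1) : ℂ) * w ^ (n+1) =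
        (dig β 1 (n+1) : ℂ) * w ^ (n+1) - (if n = L - 1 then (1:ℂ) else 0) * w ^ (n+1) := by
      intro n hn
      have hnL : n < L := Finset.mem_range.mp hn
      unfold qdig
      rw [if_pos hsimple]
      have hmod : (n + 1 - 1) % Lpt β 1 = n := by
        simp only [Nat.add_sub_cancel, ← hL_def]
        exact Nat.mod_eq_of_lt hnL
      rw [hmod, ← hL_def]
      by_cases h : n = L - 1
      · rw [if_pos h, if_pos h]
        have : n + 1 = L := by omega
        rw [this]
        push_cast
        ring
      · rw [if_neg h, if_neg h]
        ring
    rw [Finset.sum_congr rfl hco, Finset.sum_sub_distrib]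
    congr 1
    have : (∑ n ∈ Finset.range L, (if n = L - 1 then (1:ℂ) else 0) * w ^ (n+1)) =
        ∑ n ∈ Finset.range L, (if n = L - 1 then w ^ (n+1) else 0) := by
      apply Finset.sum_congr rfl
      intro n _
      split <;> simp
    rw [this, Finset.sum_ite_eq' (Finset.range L) (L-1) (fun n => w ^ (n+1))]
    rw [if_pos (Finset.mem_range.mpr (by omega))]
    congr 1
    omega
  -- put it together
  have key := hsplit
  rw [htail, hblock] at key
  constructor
  · linear_combination key + hphi
  · intro h
    have h1 : (1:ℂ) = w ^ L := sub_eq_zero.mp h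
    have h2 : ‖w ^ L‖ < 1 := by
      rw [norm_pow]
      exact pow_lt_one₀ (norm_nonneg w) hw (by omega)
    rw [← h1] at h2
    simp at h2
end

section
/- Let β > 1 and let λ ∈ ℂ with 1/β < |λ| ≤ 1. Then the function F_λ : [0,1] → ℂ, F_λ(x) = Σ_{n=1}^∞ a_n(β,x)/(βλ)^n, is right-continuous at every point x ∈ [0,1): F_λ(y) → F_λ(x) as y → x with y > x. -/
open scoped BigOperators

lemma tau_eq_fract (β y : ℝ) : tau β y = Int.fract (β * y) := rfl

lemma tau_mem (β y : ℝ) : tau β y ∈ Set.Ico (0:ℝ) 1 := by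
  rw [tau_eq_fract]
  exact ⟨Int.fract_nonneg _, Int.fract_lt_one _⟩

lemma iter_mem (β y : ℝ) (hy : y ∈ Set.Icc (0:ℝ) 1) (n : ℕ) :
    (tau β)^[n] y ∈ Set.Icc (0:ℝ) 1 := by
  induction n with
  | zero => simpa using hy
  | succ n ih =>
      rw [Function.iterate_succ_apply']
      exact ⟨(tau_mem β _).1, le_of_lt (tau_mem β _).2⟩

lemma iter_shift (β x : ℝ) (hβ : 1 < β) (n : ℕ) :
    ∃ δ > 0, ∀ y, x ≤ y → y < x + δ →
      (tau β)^[n] y = (tau β)^[n] x + β ^ n * (y - x) := by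
  induction n with
  | zero => exact ⟨1, one_pos, fun y _ _ => by simp⟩
  | succ n ih =>
      obtain ⟨δ, hδ, h⟩ := ih
      have hβ0 : (0:ℝ) < β := by linarith
      have hβn : (0:ℝ) < β ^ (n+1) := pow_pos hβ0 _
      set t := β * (tau β)^[n] x with ht
      have hfract : Int.fract t < 1 := Int.fract_lt_one t
      have hfr : Int.fract t = t - ⌊t⌋ := rfl
      refine ⟨min δ ((1 - Int.fract t) / β ^ (n+1)), lt_min hδ (div_pos (by linarith) hβn), fun y hy1 hy2 => ?_⟩
      have hyδ : y < x + δ := by linarith [min_le_left δ ((1 - Int.fract t) / β ^ (n+1))]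
      have hy3 : y - x < (1 - Int.fract t) / β ^ (n+1) := by
        have := min_le_right δ ((1 - Int.fract t) / β ^ (n+1))
        linarith
      have hy4 : β ^ (n+1) * (y - x) < 1 - Int.fract t := by
        have := (lt_div_iff₀ hβn).mp hy3
        linarith
      have hiter := h y hy1 hyδ
      have hkey : β * (tau β)^[n] y = t + β ^ (n+1) * (y - x) := by
        rw [hiter]; ring
      have hfloor : ⌊β * (tau β)^[n] y⌋ = ⌊t⌋ := by
        rw [hkey]
        apply Int.floor_eq_iff.mpr
        refine ⟨?_, ?_⟩
        · have h1 : (⌊t⌋ : ℝ) ≤ t := Int.floor_le t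
          nlinarith [mul_nonneg (le_of_lt hβn) (sub_nonneg.mpr hy1)]
        · push_cast; linarith
      rw [Function.iterate_succ_apply', Function.iterate_succ_apply', tau, tau, hfloor, hkey]
      ring

lemma floor_shift (β x : ℝ) (hβ : 1 < β) (n : ℕ) :
    ∃ δ > 0, ∀ y, x ≤ y → y < x + δ →
      ⌊β * (tau β)^[n] y⌋ = ⌊β * (tau β)^[n] x⌋ := by
  obtain ⟨δ, hδ, h⟩ := iter_shift β x hβ n
  have hβ0 : (0:ℝ) < β := by linarith
  have hβn : (0:ℝ) < β ^ (n+1) := pow_pos hβ0 _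
  set t := β * (tau β)^[n] x with ht
  have hfract : Int.fract t < 1 := Int.fract_lt_one t
  have hfr : Int.fract t = t - ⌊t⌋ := rfl
  refine ⟨min δ ((1 - Int.fract t) / β ^ (n+1)), lt_min hδ (div_pos (by linarith) hβn),
    fun y hy1 hy2 => ?_⟩
  have hyδ : y < x + δ := by linarith [min_le_left δ ((1 - Int.fract t) / β ^ (n+1))]
  have hy3 : y - x < (1 - Int.fract t) / β ^ (n+1) := by
    have := min_le_right δ ((1 - Int.fract t) / β ^ (n+1))
    linarith
  have hy4 : β ^ (n+1) * (y - x) < 1 - Int.fract t := by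
    have := (lt_div_iff₀ hβn).mp hy3
    linarith
  have hkey : β * (tau β)^[n] y = t + β ^ (n+1) * (y - x) := by
    rw [h y hy1 hyδ]; ring
  rw [hkey]
  apply Int.floor_eq_iff.mpr
  refine ⟨?_, by push_cast; linarith⟩
  have h1 : (⌊t⌋ : ℝ) ≤ t := Int.floor_le t
  nlinarith [mul_nonneg (le_of_lt hβn) (sub_nonneg.mpr hy1)]

lemma dig_eventually (β x : ℝ) (hβ : 1 < β) (hx : x ∈ Set.Ico (0:ℝ) 1) (n : ℕ) :
    ∀ᶠ y in nhdsWithin x (Set.Ioc x 1), dig β y (n + 1) = dig β x (n + 1) := by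
  obtain ⟨δ, hδ, h⟩ := floor_shift β x hβ n
  have h1 : ∀ᶠ y in nhdsWithin x (Set.Ioc x 1), y ∈ Set.Ioc x 1 :=
    eventually_mem_nhdsWithin
  have h2 : ∀ᶠ y in nhdsWithin x (Set.Ioc x 1), |y - x| < δ := by
    apply eventually_nhdsWithin_of_eventually_nhds
    have : Filter.Tendsto (fun y : ℝ => y - x) (nhds x) (nhds (x - x)) :=
      Filter.tendsto_id.sub tendsto_const_nhds
    rw [sub_self] at this
    simpa using this.eventually (eventually_abs_sub_lt 0 hδ)
  filter_upwards [h1, h2] with y hy hyd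
  have : y < x + δ := by
    rcases abs_lt.mp hyd with ⟨_, h'⟩; linarith
  simp only [dig, Nat.add_sub_cancel]
  exact h y (le_of_lt hy.1) this

theorem stmt14 (β : ℝ) (hβ : 1 < β) (lam : ℂ)
    (h1 : 1 / β < ‖lam‖) (h2 : ‖lam‖ ≤ 1)
    (x : ℝ) (hx : x ∈ Set.Ico (0 : ℝ) 1) :
    Filter.Tendsto (Ffun β lam) (nhdsWithin x (Set.Ioc x 1)) (nhds (Ffun β lam x)) := by
  have hβ0 : (0:ℝ) < β := by linarith
  have hlam0 : 0 < ‖lam‖ := lt_trans (by positivity) h1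
  have hr : (1:ℝ) < β * ‖lam‖ := by
    rw [div_lt_iff₀ hβ0] at h1; linarith [mul_comm (‖lam‖) β ▸ h1]
  have hr0 : (0:ℝ) < β * ‖lam‖ := by positivity
  set r : ℝ := (β * ‖lam‖)⁻¹ with hrdef
  have hr1 : r < 1 := by
    rw [hrdef, inv_lt_one_iff₀]; right; exact hr
  have hrpos : 0 < r := by positivity
  have hsum : Summable (fun k : ℕ => β / (β * ‖lam‖) ^ (k+1)) := by
    have : Summable (fun k : ℕ => (β * r) * r ^ k) :=
      (summable_geometric_of_lt_one (le_of_lt hrpos) hr1).mul_left _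
    refine this.congr fun k => ?_
    rw [hrdef]
    rw [div_eq_mul_inv, ← inv_pow, pow_succ']
    ring
  have habs : ∀ k : ℕ, ‖(β : ℂ) * lam‖ ^ (k+1) = (β * ‖lam‖) ^ (k+1) := by
    intro k
    rw [norm_mul, Complex.norm_real, Real.norm_eq_abs, abs_of_pos hβ0]
  simp only [Ffun]
  apply tendsto_tsum_of_dominated_convergence hsum
  · intro k
    apply Filter.Tendsto.congr' _ (tendsto_const_nhds)
    filter_upwards [dig_eventually β x hβ hx k] with y hy
    rw [hy]
  · filter_upwards [eventually_mem_nhdsWithin] with y hy k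
    have hyI : y ∈ Set.Icc (0:ℝ) 1 := ⟨le_trans hx.1 (le_of_lt hy.1), hy.2⟩
    have hdig0 : (0:ℤ) ≤ dig β y (k+1) := by
      simp only [dig, Nat.add_sub_cancel]
      exact Int.floor_nonneg.mpr (mul_nonneg (le_of_lt hβ0) (iter_mem β y hyI k).1)
    have hdigβ : (dig β y (k+1) : ℝ) ≤ β := by
      simp only [dig, Nat.add_sub_cancel]
      calc (⌊β * (tau β)^[k] y⌋ : ℝ) ≤ β * (tau β)^[k] y := Int.floor_le _
        _ ≤ β * 1 := by
            exact mul_le_mul_of_nonneg_left (iter_mem β y hyI k).2 (le_of_lt hβ0)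
        _ = β := mul_one β
    rw [norm_div, norm_pow, habs k,
      Complex.norm_intCast]
    gcongr
    rw [← Int.cast_abs, abs_of_nonneg hdig0]
    exact hdigβ
end
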